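/- arXiv:2311.11635 — 4 statements merged into one kernel-verified Lean document; each statement's English description precedes it below -/
import Mathlib

section
/- Let T > 0 and let h ∈ H¹₀([0,T],ℝ). Suppose φ: [0,T] → ℂ is continuous with φ(0) = 0 and A: [0,T] → ℂ is measurable with A(t)² = φ(t) and Im A(t) ≥ 0 for all t ∈ [0,T], such that φ(t) = −t + 2∫₀^t A(s) h'(s) ds for all t ∈ [0,T]. Then φ(t) ∈ ℂ \ [0,∞) for all t ∈ (0,T], and consequently A(t) = √(φ(t)) for all t ∈ (0,T]. -/
open MeasureTheory Set Filter Topology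

/-- The branch of the complex square root mapping `ℂ \ [0,∞)` into the open upper
half-plane; on `[0,∞)` it is the usual nonnegative real square root. -/
noncomputable def upSqrt (z : ℂ) : ℂ :=
  if z.im = 0 ∧ 0 ≤ z.re then (Real.sqrt z.re : ℂ)
  else Complex.I * (-z) ^ ((1 : ℂ) / 2)

/-- `z ∈ ℂ \ [0,∞)`. -/
def offPosReal (z : ℂ) : Prop := ¬(z.im = 0 ∧ 0 ≤ z.re)

/-- The Cameron–Martin space `H¹₀([0,T],ℝ)`: absolutely continuous `h` with `h 0 = 0`
and derivative `dFun ∈ L²([0,T],ℝ)`, recorded via `h t = ∫₀ᵗ h'`. -/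
structure CM (T : ℝ) where
  toFun : ℝ → ℝ
  dFun : ℝ → ℝ
  measurable_dFun : Measurable dFun
  memL2 : MeasureTheory.MemLp dFun 2 (MeasureTheory.volume.restrict (Set.Ioc 0 T))
  eq_int : ∀ t ∈ Set.Icc 0 T, toFun t = ∫ s in Set.Ioc 0 t, dFun s

/-- `φ` is the solution `φ^h`: continuous on `[0,T]`, `φ 0 = 0`, valued in
`ℂ \ [0,∞)` on `(0,T]`, and `φ t = -t + 2∫₀ᵗ √(φ s) h'(s) ds`. -/
def IsPhiH (T : ℝ) (h : CM T) (φ : ℝ → ℂ) : Prop :=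
  ContinuousOn φ (Set.Icc 0 T) ∧ φ 0 = 0 ∧
  (∀ t ∈ Set.Ioc 0 T, offPosReal (φ t)) ∧
  ∀ t ∈ Set.Icc 0 T, φ t = -(t : ℂ) + 2 * ∫ s in Set.Ioc 0 t, upSqrt (φ s) * ((h.dFun s : ℝ) : ℂ)

/-- `d` is an (integrable) a.e. derivative of `φ` on `[0,T]`, i.e. `Re φ`, `Im φ` are
absolutely continuous with `φ t = ∫₀ᵗ d`. -/
def IsDensityOn (T : ℝ) (φ : ℝ → ℂ) (d : ℝ → ℂ) : Prop :=
  MeasureTheory.IntegrableOn d (Set.Ioc 0 T) ∧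
  ∀ t ∈ Set.Icc 0 T, φ t = ∫ s in Set.Ioc 0 t, d s

/-- The rate function `I(φ) = ∫₀ᵀ (φ'(t)+1)²/(8 φ(t)) dt` for `φ ∈ D([0,T],ℂ)`
(conditions (H1),(H2),(H3)), and `+∞` otherwise.  For any admissible density `d = φ'`,
the realness condition (H3) gives `(φ'+1)²/(8φ) = (Re((φ'+1)/(2√φ)))²/2`. -/
noncomputable def rateI (T : ℝ) (φ : ℝ → ℂ) : ENNReal :=
  ⨅ (d : ℝ → ℂ) (_ : IsDensityOn T φ d ∧
      (∀ t ∈ Set.Ioc 0 T, offPosReal (φ t)) ∧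
      (∀ᵐ t ∂(MeasureTheory.volume.restrict (Set.Ioc 0 T)),
        ((d t + 1) / (2 * upSqrt (φ t))).im = 0) ∧
      MeasureTheory.MemLp (fun t => ((d t + 1) / (2 * upSqrt (φ t))).re) 2
        (MeasureTheory.volume.restrict (Set.Ioc 0 T))),
    ∫⁻ t in Set.Ioc 0 T, ENNReal.ofReal ((((d t + 1) / (2 * upSqrt (φ t))).re) ^ 2 / 2)

/-- Riemann–Stieltjes integral `∫₀ᵀ f da` in its integration-by-parts form
`f(T)a(T) - ∫₀ᵀ a(r) f'(r) dr` (for `a 0 = 0`). -/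
noncomputable def RSint (T : ℝ) (f a : ℝ → ℝ) : ℝ :=
  f T * a T - ∫ r in Set.Ioc 0 T, a r * deriv f r

/-- The functional `J_{f,g}(ξ)`. -/
noncomputable def Jfun (T : ℝ) (f g : ℝ → ℝ) (ξ : ℝ → ℂ) : ℝ :=
  (1 / 2) * (RSint T f (fun r => (ξ r).re + r) + RSint T g (fun r => (ξ r).im)) -
    (1 / 2) * ∫ r in Set.Ioc 0 T,
      (f r ^ 2 * (‖ξ r‖ + (ξ r).re) / 2 +
        g r ^ 2 * (‖ξ r‖ - (ξ r).re) / 2 + f r * g r * (ξ r).im)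

lemma offPosReal_iff {z : ℂ} : offPosReal z ↔ (z.im ≠ 0 ∨ z.re < 0) := by
  unfold offPosReal; push_neg; constructor
  · intro h; by_cases hi : z.im = 0
    · exact Or.inr (h hi)
    · exact Or.inl hi
  · rintro (h | h) hi
    · exact absurd hi h
    · exact h

lemma neg_mem_slitPlane {z : ℂ} (hz : offPosReal z) : -z ∈ Complex.slitPlane := by
  rw [Complex.mem_slitPlane_iff]
  rcases offPosReal_iff.1 hz with h | h
  · right; simpa using h
  · left; simpa using h

lemma upSqrt_eq {z : ℂ} (hz : offPosReal z) :
    upSqrt z = Complex.I * (-z) ^ ((1 : ℂ) / 2) := if_neg hz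

lemma upSqrt_spec {z : ℂ} (hz : offPosReal z) : (upSqrt z) ^ 2 = z ∧ 0 < (upSqrt z).im := by
  have hz0 : z ≠ 0 := by
    rintro rfl; exact hz ⟨rfl, le_refl 0⟩
  have hnz : -z ≠ 0 := neg_ne_zero.2 hz0
  have harg : |Complex.arg (-z)| < Real.pi := by
    have h1 := Complex.neg_pi_lt_arg (-z)
    have h2 := lt_of_le_of_ne (Complex.arg_le_pi (-z))
        (Complex.slitPlane_arg_ne_pi (neg_mem_slitPlane hz))
    rw [abs_lt]; exact ⟨h1, h2⟩
  have him2 : (Complex.log (-z) * ((1:ℂ)/2)).im = Complex.arg (-z) / 2 := by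
    simp [Complex.mul_im, Complex.log_im]; ring
  have hpi := Real.pi_pos
  rw [upSqrt_eq hz]
  constructor
  · have h2 : ((-z) ^ ((1:ℂ)/2)) ^ (2:ℕ) = -z := by
      rw [← Complex.cpow_natCast ((-z) ^ ((1:ℂ)/2)) 2, ← Complex.cpow_mul]
      · norm_num
      · rw [him2]; rcases abs_lt.1 harg with ⟨hh1, _⟩; linarith
      · rw [him2]; rcases abs_lt.1 harg with ⟨_, hh2⟩; linarith
    rw [mul_pow, Complex.I_sq, h2]; ring
  · have hre : ((-z) ^ ((1:ℂ)/2)).re > 0 := by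
      rw [Complex.cpow_def_of_ne_zero hnz, Complex.exp_re]
      apply mul_pos (Real.exp_pos _)
      apply Real.cos_pos_of_mem_Ioo
      rw [him2]
      rcases abs_lt.1 harg with ⟨hh1, hh2⟩
      constructor <;> [linarith; linarith]
    simpa [Complex.mul_im] using hre

lemma eq_upSqrt {z a : ℂ} (hz : offPosReal z) (ha : a ^ 2 = z) (him : 0 ≤ a.im) :
    a = upSqrt z := by
  obtain ⟨hsq, hpos⟩ := upSqrt_spec hz
  have hfac : (a - upSqrt z) * (a + upSqrt z) = 0 := by
    have : a ^ 2 - (upSqrt z) ^ 2 = 0 := by rw [ha, hsq]; ring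
    calc (a - upSqrt z) * (a + upSqrt z) = a ^ 2 - (upSqrt z) ^ 2 := by ring
    _ = 0 := this
  rcases mul_eq_zero.1 hfac with hc | hc
  · linear_combination hc
  · exfalso
    have : a = -upSqrt z := by linear_combination hc
    rw [this] at him
    simp only [Complex.neg_im] at him
    linarith

lemma abs_eq_re_of_not_off {z : ℂ} (h : ¬ offPosReal z) : ‖z‖ = z.re := by
  rw [offPosReal, not_not] at h
  rw [Complex.norm_def, Complex.normSq_apply, h.1, mul_zero, add_zero,
    Real.sqrt_mul_self h.2]

lemma isOpen_off : IsOpen {z : ℂ | offPosReal z} := by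
  have h1 : {z : ℂ | offPosReal z} = ({z : ℂ | z.im = 0} ∩ {z : ℂ | 0 ≤ z.re})ᶜ := by
    ext z; simp [offPosReal, Set.mem_inter_iff]
  rw [h1]
  exact (IsClosed.inter (isClosed_eq Complex.continuous_im continuous_const)
    (isClosed_le continuous_const Complex.continuous_re)).isOpen_compl

lemma continuousAt_upSqrt {z : ℂ} (hz : offPosReal z) : ContinuousAt upSqrt z := by
  have h2 : ContinuousAt (fun w : ℂ => Complex.I * (-w) ^ ((1:ℂ)/2)) z := by
    apply ContinuousAt.mul continuousAt_const
    exact (continuousAt_cpow_const (neg_mem_slitPlane hz)).comp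
      continuous_neg.continuousAt
  refine h2.congr ?_
  filter_upwards [isOpen_off.mem_nhds hz] with w hw
  exact (if_neg hw).symm

lemma step_ineq {g : ℝ → ℝ} {A φ : ℝ → ℂ} {T σ τ : ℝ} (ε : ℝ)
    (hg : IntegrableOn (fun s => |g s|) (Ioc 0 T))
    (hAg : IntegrableOn (fun s => A s * (g s : ℂ)) (Ioc 0 T))
    (hστ : σ ≤ τ) (hσ0 : 0 ≤ σ) (hτT : τ ≤ T)
    (hφσ : φ σ ≠ 0)
    (hAσ : A σ ^ 2 = φ σ)
    (hdiff : φ τ - φ σ = -((τ - σ : ℝ) : ℂ) + 2 * ∫ s in Ioc σ τ, A s * (g s : ℂ))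
    (hclose : ∀ r ∈ Ioc σ τ, ‖A r - A σ‖ ≤ ε) (hε : 0 ≤ ε) :
    (‖φ τ‖ - (φ τ).re) - (‖φ σ‖ - (φ σ).re)
      ≥ -(4 * ε) * ∫ r in Ioc σ τ, |g r| := by
  have hsub : Ioc σ τ ⊆ Ioc 0 T := Set.Ioc_subset_Ioc hσ0 hτT
  have hg' : IntegrableOn (fun s => |g s|) (Ioc σ τ) := hg.mono_set hsub
  have hAg' : IntegrableOn (fun s => A s * (g s : ℂ)) (Ioc σ τ) := hAg.mono_set hsub
  set c : ℂ := (starRingEnd ℂ) (φ σ) / (‖φ σ‖ : ℂ) with hc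
  have habsφ : (0:ℝ) < ‖φ σ‖ := by
    simpa [norm_pos_iff] using hφσ
  have habsc : ‖c‖ = 1 := by
    rw [hc, norm_div]
    simp [Complex.norm_conj, abs_of_pos habsφ, div_self (ne_of_gt habsφ)]
  have hrec : c.re ≤ 1 := le_trans (Complex.re_le_norm c) (le_of_eq habsc)
  have hcφσ : (c * φ σ).re = ‖φ σ‖ := by
    rw [hc, div_mul_eq_mul_div, mul_comm ((starRingEnd ℂ) (φ σ)) (φ σ), Complex.mul_conj,
      ← Complex.ofReal_div, Complex.ofReal_re, Complex.normSq_eq_norm_sq]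
    field_simp
  have habsA : (‖A σ‖)^2 = ‖φ σ‖ := by
    rw [← hAσ, norm_pow]
  have hcA : c * A σ = (starRingEnd ℂ) (A σ) := by
    have h0 : (starRingEnd ℂ) (φ σ) * A σ
        = (starRingEnd ℂ) (A σ) * (A σ * (starRingEnd ℂ) (A σ)) := by
      rw [← hAσ, map_pow]; ring
    have h1 : (starRingEnd ℂ) (φ σ) * A σ
        = (starRingEnd ℂ) (A σ) * ((‖φ σ‖ : ℝ) : ℂ) := by
      rw [h0, Complex.mul_conj, Complex.normSq_eq_norm_sq, ← habsA]
    rw [hc, div_mul_eq_mul_div, h1, mul_div_assoc,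
      div_self (by exact_mod_cast ne_of_gt habsφ), mul_one]
  set J : ℂ := ∫ s in Ioc σ τ, A s * ((g s : ℝ) : ℂ) with hJ
  have hptre : ∀ s : ℝ, (A s * ((g s : ℝ) : ℂ)).re = (A s).re * g s := by
    intro s; rw [mul_comm, Complex.re_ofReal_mul]; ring
  set X : ℝ := ∫ s in Ioc σ τ, (A s).re * g s with hX
  have hReJ : J.re = X := by
    have h1 := _root_.integral_re hAg'
    simp only [RCLike.re_to_complex] at h1
    rw [hJ, ← h1, hX]
    exact integral_congr_ae (Filter.Eventually.of_forall fun s => (hptre s))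
  have hcmul : c * J = ∫ s in Ioc σ τ, c * (A s * ((g s : ℝ) : ℂ)) :=
    (integral_const_mul c _).symm
  have hcJre : (c * J).re = ∫ s in Ioc σ τ, (c * (A s * ((g s : ℝ) : ℂ))).re := by
    have h1 := _root_.integral_re (hAg'.const_mul c)
    simp only [RCLike.re_to_complex] at h1
    rw [hcmul, ← h1]
  have hpt : ∀ s : ℝ, (c * (A s * ((g s : ℝ) : ℂ))).re
      = (A s).re * g s + ((c - 1) * (A s - A σ)).re * g s := by
    intro s
    have h2 : (c * A s).re = (A s).re + ((c - 1) * (A s - A σ)).re := by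
      have h3 : (c - 1) * (A s - A σ) = c * A s - A s - c * A σ + A σ := by ring
      rw [h3, hcA]
      simp only [Complex.add_re, Complex.sub_re, Complex.conj_re]
      ring
    have h4 : c * (A s * ((g s : ℝ) : ℂ)) = ((g s : ℝ) : ℂ) * (c * A s) := by ring
    rw [h4, Complex.re_ofReal_mul, h2]; ring
  have hEint : IntegrableOn (fun s => ((c - 1) * (A s - A σ)).re * g s) (Ioc σ τ) := by
    have h6 : Integrable (fun s => (c * (A s * ((g s : ℝ) : ℂ))).re
        - (A s).re * g s) (volume.restrict (Ioc σ τ)) := by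
      have h7 := ((hAg'.const_mul c).re).sub (hAg'.re)
      simp only [RCLike.re_to_complex] at h7
      refine h7.congr (Filter.Eventually.of_forall fun s => ?_)
      simp [hptre s]
    refine h6.congr (Filter.Eventually.of_forall fun s => ?_)
    show (c * (A s * ((g s : ℝ) : ℂ))).re - (A s).re * g s = _
    rw [hpt s]; ring
  have hαgint : IntegrableOn (fun s => (A s).re * g s) (Ioc σ τ) := by
    have h7 := hAg'.re
    simp only [RCLike.re_to_complex] at h7
    refine h7.congr (Filter.Eventually.of_forall fun s => hptre s)
  set E : ℝ := ∫ s in Ioc σ τ, ((c - 1) * (A s - A σ)).re * g s with hE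
  have hsplit : (c * J).re = X + E := by
    rw [hcJre, hX, hE, ← integral_add hαgint hEint]
    exact integral_congr_ae (Filter.Eventually.of_forall fun s => hpt s)
  have hc1 : ‖c - 1‖ ≤ 2 := by
    calc ‖c - 1‖ ≤ ‖c‖ + ‖(1:ℂ)‖ := by
          simpa using norm_sub_le c 1
    _ = 2 := by rw [habsc]; norm_num
  have hEbdd : |E| ≤ 2 * ε * ∫ s in Ioc σ τ, |g s| := by
    have h7 : |E| ≤ ∫ s in Ioc σ τ, |((c - 1) * (A s - A σ)).re * g s| := by
      have h7a := norm_integral_le_integral_norm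
        (μ := volume.restrict (Ioc σ τ)) (fun s => ((c - 1) * (A s - A σ)).re * g s)
      simp only [Real.norm_eq_abs] at h7a
      exact h7a
    have h8 : ∫ s in Ioc σ τ, |((c - 1) * (A s - A σ)).re * g s|
        ≤ ∫ s in Ioc σ τ, 2 * ε * |g s| := by
      refine setIntegral_mono_on hEint.abs (hg'.const_mul _) measurableSet_Ioc
        (fun s hs => ?_)
      rw [abs_mul]
      have h9 : |((c - 1) * (A s - A σ)).re| ≤ 2 * ε := by
        calc |((c - 1) * (A s - A σ)).re| ≤ ‖(c - 1) * (A s - A σ)‖ :=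
              Complex.abs_re_le_norm _
        _ = ‖c - 1‖ * ‖A s - A σ‖ := norm_mul _ _
        _ ≤ 2 * ε := by
            have := hclose s hs
            nlinarith [norm_nonneg (A s - A σ), norm_nonneg (c - 1)]
      exact mul_le_mul_of_nonneg_right h9 (abs_nonneg _)
    calc |E| ≤ ∫ s in Ioc σ τ, 2 * ε * |g s| := le_trans h7 h8
    _ = 2 * ε * ∫ s in Ioc σ τ, |g s| := integral_const_mul _ _
  -- real part of the difference equation
  have e2 : ∀ w : ℂ, ((2 : ℂ) * w).re = 2 * w.re := by
    intro w
    have : ((2:ℂ)) = ((2:ℝ):ℂ) := by norm_num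
    rw [this, Complex.re_ofReal_mul]
  have hre_diff : (φ τ).re - (φ σ).re = -(τ - σ) + 2 * X := by
    have h14 := congrArg Complex.re hdiff
    rw [Complex.sub_re, Complex.add_re, Complex.neg_re, Complex.ofReal_re, e2, hReJ] at h14
    exact h14
  have hlow : ‖φ τ‖ ≥ ‖φ σ‖ + (-(τ - σ) * c.re + 2 * (X + E)) := by
    have h10 : (c * φ τ).re ≤ ‖φ τ‖ := by
      calc (c * φ τ).re ≤ ‖c * φ τ‖ := Complex.re_le_norm _
      _ = ‖c‖ * ‖φ τ‖ := norm_mul _ _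
      _ = ‖φ τ‖ := by rw [habsc, one_mul]
    have h11 : c * φ τ = c * φ σ + (-((τ - σ : ℝ) : ℂ) * c + 2 * (c * J)) := by
      linear_combination c * hdiff
    have h12 : (c * φ τ).re = ‖φ σ‖ + (-(τ - σ) * c.re + 2 * (X + E)) := by
      have h13 := congrArg Complex.re h11
      rw [Complex.add_re, Complex.add_re, hcφσ, e2, hsplit] at h13
      rw [h13]
      have e3 : (-((τ - σ : ℝ) : ℂ) * c).re = -(τ - σ) * c.re := by
        rw [← Complex.ofReal_neg, Complex.re_ofReal_mul]
      rw [e3]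
    linarith [h10, h12.symm.le]
  have hEe : -(2 * ε * ∫ s in Ioc σ τ, |g s|) ≤ E := neg_le_of_abs_le hEbdd
  have hprod : 0 ≤ (τ - σ) * (1 - c.re) := mul_nonneg (by linarith) (by linarith)
  have hRnn : 0 ≤ ∫ s in Ioc σ τ, |g s| := integral_nonneg (fun s => abs_nonneg _)
  nlinarith [hlow, hre_diff, hEe, hprod]

lemma mono_lemma {g : ℝ → ℝ} {A φ : ℝ → ℂ} {T s t : ℝ}
    (hg : IntegrableOn (fun s => |g s|) (Ioc 0 T))
    (hAg : IntegrableOn (fun s => A s * (g s : ℂ)) (Ioc 0 T))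
    (hst : s ≤ t) (hs0 : 0 ≤ s) (htT : t ≤ T)
    (hφ : ∀ r ∈ Icc s t, φ r ≠ 0)
    (hA : ∀ r ∈ Icc s t, A r ^ 2 = φ r)
    (hdiff : ∀ σ τ : ℝ, s ≤ σ → σ ≤ τ → τ ≤ t →
        φ τ - φ σ = -((τ - σ : ℝ) : ℂ) + 2 * ∫ r in Ioc σ τ, A r * (g r : ℂ))
    (hAcont : ContinuousOn A (Icc s t)) :
    ‖φ s‖ - (φ s).re ≤ ‖φ t‖ - (φ t).re := by
  rcases eq_or_lt_of_le hst with rfl | hlt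
  · exact le_refl _
  have hIocST : Ioc s t ⊆ Ioc 0 T := Set.Ioc_subset_Ioc hs0 htT
  have hgst : IntegrableOn (fun s => |g s|) (Ioc s t) := hg.mono_set hIocST
  set R : ℝ := ∫ r in Ioc s t, |g r| with hR
  have hRnn : 0 ≤ R := integral_nonneg fun _ => abs_nonneg _
  refine le_of_forall_pos_le_add fun ε hε => ?_
  set ε' : ℝ := ε / (4 * (R + 1)) with hε'def
  have hε' : 0 < ε' := by positivity
  -- uniform continuity
  obtain ⟨δ, hδ, hunif⟩ := Metric.uniformContinuousOn_iff.1
    (isCompact_Icc.uniformContinuousOn_of_continuous hAcont) ε' hε'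
  obtain ⟨n, hn⟩ := exists_nat_gt ((t - s) / δ)
  have hts : 0 < t - s := by linarith
  have hnpos : 0 < (n : ℝ) := lt_trans (div_pos hts hδ) hn
  set d : ℝ := (t - s) / n with hd
  have hdpos : 0 < d := div_pos hts hnpos
  have hdδ : d < δ := by
    rw [hd, div_lt_iff₀ hnpos]
    rw [div_lt_iff₀ hδ] at hn
    linarith [hn]
  set rr : ℕ → ℝ := fun k => s + k * d with hrr
  have hrr0 : rr 0 = s := by simp [hrr]
  have hrrn : rr n = t := by
    simp only [hrr, hd]
    field_simp
    ring
  have hrrmem : ∀ k : ℕ, k ≤ n → rr k ∈ Icc s t := by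
    intro k hk
    constructor
    · simp only [hrr]; nlinarith [hdpos, Nat.cast_nonneg (α := ℝ) k]
    · have hkn : (k : ℝ) ≤ n := by exact_mod_cast hk
      have h7 : rr k ≤ rr n := by
        simp only [hrr]; nlinarith [le_of_lt hdpos]
      rw [hrrn] at h7; exact h7
  have hstep : ∀ k : ℕ, k + 1 ≤ n →
      (‖φ (rr (k+1))‖ - (φ (rr (k+1))).re)
        - (‖φ (rr k)‖ - (φ (rr k)).re)
      ≥ -(4 * ε') * ∫ r in Ioc (rr k) (rr (k+1)), |g r| := by
    intro k hk
    have hk' : k ≤ n := Nat.le_of_succ_le hk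
    have hmemk := hrrmem k hk'
    have hmemk1 := hrrmem (k+1) hk
    have hle : rr k ≤ rr (k+1) := by
      simp only [hrr]; push_cast; nlinarith [le_of_lt hdpos]
    refine step_ineq ε' hg hAg hle (le_trans hs0 hmemk.1) (le_trans hmemk1.2 htT)
      (hφ _ hmemk) (hA _ hmemk)
      (hdiff _ _ hmemk.1 hle hmemk1.2) ?_ (le_of_lt hε')
    intro ρ hρ
    have hρIcc : ρ ∈ Icc s t := ⟨le_trans hmemk.1 (le_of_lt hρ.1), le_trans hρ.2 hmemk1.2⟩
    have hdist : dist ρ (rr k) < δ := by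
      rw [Real.dist_eq, abs_of_nonneg (by linarith [hρ.1.le] : (0:ℝ) ≤ ρ - rr k)]
      have h2 : rr (k+1) - rr k = d := by simp only [hrr]; push_cast; ring
      have := hρ.2
      linarith [hdδ]
    exact le_of_lt (by rw [← dist_eq_norm]; exact hunif ρ hρIcc (rr k) hmemk hdist)
  -- induction
  have hint : ∀ a b : ℝ, s ≤ a → a ≤ b → b ≤ t → IntegrableOn (fun r => |g r|) (Ioc a b) :=
    fun a b ha hab hb => hg.mono_set (Set.Ioc_subset_Ioc (le_trans hs0 ha) (le_trans hb htT))
  have key : ∀ k : ℕ, k ≤ n →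
      ‖φ s‖ - (φ s).re - 4 * ε' * ∫ r in Ioc s (rr k), |g r|
        ≤ ‖φ (rr k)‖ - (φ (rr k)).re := by
    intro k
    induction k with
    | zero => intro _; simp [hrr0]
    | succ k ih =>
      intro hk1
      have hk : k ≤ n := Nat.le_of_succ_le hk1
      have hmemk := hrrmem k hk
      have hmemk1 := hrrmem (k+1) hk1
      have hle : rr k ≤ rr (k+1) := by
        simp only [hrr]; push_cast; nlinarith [le_of_lt hdpos]
      have hadd : (∫ r in Ioc s (rr (k+1)), |g r|)
          = (∫ r in Ioc s (rr k), |g r|) + ∫ r in Ioc (rr k) (rr (k+1)), |g r| := by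
        rw [← Set.Ioc_union_Ioc_eq_Ioc hmemk.1 hle]
        exact setIntegral_union (Set.Ioc_disjoint_Ioc_of_le le_rfl) measurableSet_Ioc
          (hint s (rr k) (le_refl s) hmemk.1 hmemk.2)
          (hint (rr k) (rr (k+1)) hmemk.1 hle hmemk1.2)
      have h1 := hstep k hk1
      have h2 := ih hk
      rw [hadd]
      linarith [h1, h2]
  have hfin := key n (le_refl n)
  rw [hrrn] at hfin
  have h4 : 4 * ε' * R ≤ ε := by
    rw [hε'def]
    have h5 : (0:ℝ) < R + 1 := by linarith
    have h6 : 4 * (ε / (4 * (R + 1))) * R = ε * R / (R + 1) := by field_simp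
    rw [h6, div_le_iff₀ h5]
    nlinarith [hRnn, hε]
  rw [← hR] at hfin
  linarith [hfin, h4]

lemma smalltime {g : ℝ → ℝ} {A φ : ℝ → ℂ} {T b : ℝ}
    (hb : 0 < b) (hbT : b ≤ T)
    (hgsq : IntegrableOn (fun s => g s ^ 2) (Ioc 0 T))
    (hαg : IntegrableOn (fun s => (A s).re * g s) (Ioc 0 T))
    (hφre : IntegrableOn (fun s => (φ s).re) (Ioc 0 T))
    (hre_eq : ∀ τ ∈ Icc 0 T, (φ τ).re = -τ + 2 * ∫ r in Ioc 0 τ, (A r).re * g r)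
    (hsq : ∀ r ∈ Ioc 0 b, (φ r).re = (A r).re ^ 2)
    (hsmall : ∃ t ∈ Ioc 0 b, 4 * ∫ r in Ioc 0 t, g r ^ 2 < 1) : False := by
  obtain ⟨t, ⟨ht0, htb⟩, hc2⟩ := hsmall
  have htT : t ≤ T := le_trans htb hbT
  set c2 : ℝ := ∫ r in Ioc 0 t, g r ^ 2 with hc2def
  set F : ℝ := ∫ r in Ioc 0 t, (φ r).re with hF
  have hsubT : ∀ {u : ℝ}, u ≤ t → Ioc 0 u ⊆ Ioc 0 T :=
    fun {u} hu => Set.Ioc_subset_Ioc (le_refl 0) (le_trans hu htT)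
  -- pointwise bound on the integrand
  have hptw : ∀ r ∈ Ioc 0 t, 2 * ((A r).re * g r) ≤ (φ r).re / (2 * t) + 2 * t * g r ^ 2 := by
    intro r hr
    have hrb : r ∈ Ioc 0 b := ⟨hr.1, le_trans hr.2 htb⟩
    rw [hsq r hrb]
    have h0 := sq_nonneg ((A r).re - 2 * t * g r)
    have ht' : 0 < 2 * t := by linarith
    rw [div_add' _ _ _ (ne_of_gt ht'), le_div_iff₀ ht']
    nlinarith [h0]
  -- nonnegativity of Re φ on Ioc 0 t
  have hφnn : ∀ r ∈ Ioc 0 t, 0 ≤ (φ r).re := by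
    intro r hr
    rw [hsq r ⟨hr.1, le_trans hr.2 htb⟩]; exact sq_nonneg _
  have hFnn : 0 ≤ F := setIntegral_nonneg measurableSet_Ioc hφnn
  have hc2nn : 0 ≤ c2 := setIntegral_nonneg measurableSet_Ioc (fun r _ => sq_nonneg _)
  set K : ℝ := F / (2 * t) + 2 * t * c2 with hK
  -- bound on 2 H s for s ≤ t
  have hHbound : ∀ s : ℝ, 0 ≤ s → s ≤ t → 2 * (∫ r in Ioc 0 s, (A r).re * g r) ≤ K := by
    intro s hs0 hst
    have hsub : Ioc 0 s ⊆ Ioc 0 t := Set.Ioc_subset_Ioc (le_refl 0) hst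
    have h1 : 2 * (∫ r in Ioc 0 s, (A r).re * g r)
        = ∫ r in Ioc 0 s, 2 * ((A r).re * g r) := (integral_const_mul 2 _).symm
    have h2 : (∫ r in Ioc 0 s, 2 * ((A r).re * g r))
        ≤ ∫ r in Ioc 0 s, ((φ r).re / (2 * t) + 2 * t * g r ^ 2) := by
      refine setIntegral_mono_on ((hαg.mono_set (hsubT hst)).const_mul 2)
        (((hφre.mono_set (hsubT hst)).div_const _).add
          ((hgsq.mono_set (hsubT hst)).const_mul _))
        measurableSet_Ioc (fun r hr => hptw r (hsub hr))
    have h3 : (∫ r in Ioc 0 s, ((φ r).re / (2 * t) + 2 * t * g r ^ 2))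
        ≤ ∫ r in Ioc 0 t, ((φ r).re / (2 * t) + 2 * t * g r ^ 2) := by
      refine setIntegral_mono_set
        (((hφre.mono_set (hsubT (le_refl t))).div_const _).add
          ((hgsq.mono_set (hsubT (le_refl t))).const_mul _))
        ?_ (HasSubset.Subset.eventuallyLE hsub)
      filter_upwards [ae_restrict_mem measurableSet_Ioc] with r hr
      have := hφnn r hr
      have h4 : 0 < 2 * t := by linarith
      positivity
    have h5 : (∫ r in Ioc 0 t, ((φ r).re / (2 * t) + 2 * t * g r ^ 2)) = K := by
      rw [hK, hc2def, hF]
      rw [integral_add ((hφre.mono_set (hsubT (le_refl t))).div_const _)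
        ((hgsq.mono_set (hsubT (le_refl t))).const_mul _)]
      rw [integral_div, integral_const_mul]
    rw [h1]
    exact le_trans h2 (le_trans h3 (le_of_eq h5))
  -- Re φ s ≤ K on Ioc 0 t
  have hφK : ∀ s ∈ Ioc 0 t, (φ s).re ≤ K := by
    intro s hs
    rw [hre_eq s ⟨le_of_lt hs.1, le_trans hs.2 htT⟩]
    have := hHbound s (le_of_lt hs.1) hs.2
    linarith [hs.1]
  -- F ≤ K * t
  have hFK : F ≤ K * t := by
    have h6 : F ≤ ∫ _ in Ioc 0 t, K :=
      setIntegral_mono_on (hφre.mono_set (hsubT (le_refl t)))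
        (integrableOn_const measure_Ioc_lt_top.ne) measurableSet_Ioc hφK
    have h7 : (∫ _ in Ioc 0 t, K) = K * t := by
      rw [setIntegral_const, smul_eq_mul, Real.volume_real_Ioc_of_le ht0.le, sub_zero,
        mul_comm]
    linarith
  -- conclude
  have hKval : K = F / (2 * t) + 2 * t * c2 := hK
  have hFle : F ≤ 4 * t ^ 2 * c2 := by
    have := hFK
    rw [hKval] at this
    have ht' : 0 < t := ht0
    have h8 : F / (2 * t) * t = F / 2 := by field_simp
    nlinarith [this]
  have hlast : t ≤ K := by
    have h9 := hre_eq t ⟨le_of_lt ht0, htT⟩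
    have h10 := hφnn t ⟨ht0, le_refl t⟩
    have h11 := hHbound t (le_of_lt ht0) (le_refl t)
    linarith
  rw [hKval] at hlast
  have h12 : F / (2 * t) ≤ 2 * t * c2 := by
    rw [div_le_iff₀ (by linarith : (0:ℝ) < 2 * t)]
    nlinarith [hFle]
  nlinarith [hlast, h12, hc2, ht0]

lemma exists_small {g : ℝ → ℝ} {T b : ℝ} (hb : 0 < b) (hbT : b ≤ T)
    (hgsq : IntegrableOn (fun s => g s ^ 2) (Ioc 0 T)) :
    ∃ t ∈ Ioc 0 b, 4 * ∫ r in Ioc 0 t, g r ^ 2 < 1 := by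
  set μ := volume.restrict (Ioc 0 T) with hμ
  set F : ℕ → ℝ → ℝ := fun n x => (Ioc (0:ℝ) (b / (n + 1))).indicator (fun r => g r ^ 2) x
    with hFdef
  have hFint : ∀ n : ℕ, ∫ x, F n x ∂μ = ∫ r in Ioc 0 (b / (n + 1)), g r ^ 2 := by
    intro n
    rw [hFdef]
    rw [integral_indicator measurableSet_Ioc]
    rw [hμ, Measure.restrict_restrict measurableSet_Ioc]
    congr 1
    rw [Set.inter_eq_self_of_subset_left]
    refine Set.Ioc_subset_Ioc (le_refl 0) ?_
    have h1 : (0:ℝ) < n + 1 := by positivity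
    rw [div_le_iff₀ h1]
    nlinarith [hb]
  have htend : Tendsto (fun n => ∫ x, F n x ∂μ) atTop (𝓝 0) := by
    have h0 : (0:ℝ) = ∫ (_ : ℝ), (0:ℝ) ∂μ := by simp
    rw [h0]
    refine tendsto_integral_of_dominated_convergence (fun r => g r ^ 2)
      (fun n => (hgsq.aestronglyMeasurable.indicator measurableSet_Ioc))
      hgsq (fun n => Filter.Eventually.of_forall fun x => ?_)
      (Filter.Eventually.of_forall fun x => ?_)
    · show ‖(Ioc (0:ℝ) (b / (n + 1))).indicator (fun r => g r ^ 2) x‖ ≤ g x ^ 2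
      rw [Real.norm_eq_abs]
      by_cases hx : x ∈ Ioc (0:ℝ) (b / (n + 1))
      · rw [Set.indicator_of_mem hx]; rw [abs_of_nonneg (sq_nonneg _)]
      · rw [Set.indicator_of_notMem hx]; simp [sq_nonneg]
    · show Tendsto (fun n : ℕ => (Ioc (0:ℝ) (b / (n + 1))).indicator (fun r => g r ^ 2) x)
          atTop (𝓝 0)
      by_cases hx : 0 < x
      · have : ∀ᶠ n in atTop, F n x = 0 := by
          obtain ⟨N, hN⟩ := exists_nat_gt (b / x)
          filter_upwards [eventually_ge_atTop N] with n hn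
          show (Ioc (0:ℝ) (b / (n + 1))).indicator (fun r => g r ^ 2) x = 0
          refine Set.indicator_of_notMem (fun hmem => ?_) _
          have h2 : b / ((n:ℝ) + 1) < x := by
            rw [div_lt_iff₀ (by positivity)]
            rw [div_lt_iff₀ hx] at hN
            have h3 : (N:ℝ) ≤ n := by exact_mod_cast hn
            nlinarith [hx]
          exact absurd hmem.2 (not_le.2 h2)
        exact Tendsto.congr' (by filter_upwards [this] with n h using h.symm) tendsto_const_nhds
      · have : ∀ n, F n x = 0 := fun n =>
          Set.indicator_of_notMem (fun hmem => hx hmem.1) _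
        have h9 : (fun n : ℕ => (Ioc (0:ℝ) (b / (n + 1))).indicator (fun r => g r ^ 2) x)
            = fun _ : ℕ => (0:ℝ) := funext fun n => this n
        rw [h9]
        exact tendsto_const_nhds
  have hev : ∀ᶠ n in atTop, (∫ x, F n x ∂μ) < 1/4 :=
    htend.eventually (gt_mem_nhds (by norm_num : (0:ℝ) < 1/4))
  obtain ⟨n, hn⟩ := hev.exists
  refine ⟨b / (n + 1), ⟨by positivity, ?_⟩, ?_⟩
  · apply div_le_self (le_of_lt hb)
    have : (0:ℝ) ≤ n := Nat.cast_nonneg n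
    linarith
  · rw [← hFint n]
    linarith [hn]

/-- Any solution of `φ t = -t + 2∫₀ᵗ A h'` with `A` an adapted/measurable
branch square root of `φ` satisfies `φ t ∈ ℂ \ [0,∞)` for all `t ∈ (0,T]`, and hence
`A t = √(φ t)` there. -/
theorem stmt0 (T : ℝ) (hT : 0 < T) (h : CM T) (φ A : ℝ → ℂ)
    (hφc : ContinuousOn φ (Set.Icc 0 T)) (hφ0 : φ 0 = 0)
    (hAmeas : Measurable A)
    (hAsq : ∀ t ∈ Set.Icc 0 T, A t ^ 2 = φ t ∧ 0 ≤ (A t).im)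
    (heq : ∀ t ∈ Set.Icc 0 T,
      φ t = -(t : ℂ) + 2 * ∫ s in Set.Ioc 0 t, A s * ((h.dFun s : ℝ) : ℂ)) :
    ∀ t ∈ Set.Ioc 0 T, offPosReal (φ t) ∧ A t = upSqrt (φ t) := by
  set g : ℝ → ℝ := h.dFun with hgdef
  haveI : IsFiniteMeasure (volume.restrict (Ioc (0:ℝ) T)) :=
    ⟨by rw [Measure.restrict_apply_univ]; exact measure_Ioc_lt_top⟩
  have hg2 : IntegrableOn (fun s => g s ^ 2) (Ioc 0 T) := h.memL2.integrable_sq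
  have hgint : IntegrableOn g (Ioc 0 T) := h.memL2.integrable (by norm_num)
  have hgabs : IntegrableOn (fun s => |g s|) (Ioc 0 T) := hgint.abs
  -- boundedness of A on [0,T]
  obtain ⟨M, hM⟩ := isCompact_Icc.exists_bound_of_continuousOn hφc
  have hAbd : ∀ r ∈ Icc 0 T, ‖A r‖ ≤ Real.sqrt M := by
    intro r hr
    rw [show Real.sqrt M = Real.sqrt M from rfl]
    have h1 : ‖A r‖ ^ 2 = ‖φ r‖ := by
      rw [← (hAsq r hr).1, norm_pow]
    have h2 : ‖φ r‖ ≤ M := by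
      have := hM r hr; exact this
    have h3 : ‖A r‖ ^ 2 ≤ M := h1.le.trans h2
    nlinarith [Real.sq_sqrt (le_trans (sq_nonneg (‖A r‖)) h3),
      Real.sqrt_nonneg M, norm_nonneg (A r)]
  have hAgint : IntegrableOn (fun s => A s * (g s : ℂ)) (Ioc 0 T) := by
    refine Integrable.bdd_mul (c := Real.sqrt M) (hgint.ofReal (𝕜 := ℂ))
      hAmeas.aestronglyMeasurable ?_
    filter_upwards [ae_restrict_mem measurableSet_Ioc] with r hr
    exact hAbd r ⟨le_of_lt hr.1, hr.2⟩
  -- difference equation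
  have hdiffφ : ∀ σ τ : ℝ, 0 ≤ σ → σ ≤ τ → τ ≤ T →
      φ τ - φ σ = -((τ - σ : ℝ) : ℂ) + 2 * ∫ r in Ioc σ τ, A r * (g r : ℂ) := by
    intro σ τ h0σ hστ hτT
    have hσI : σ ∈ Icc (0:ℝ) T := ⟨h0σ, le_trans hστ hτT⟩
    have hτI : τ ∈ Icc (0:ℝ) T := ⟨le_trans h0σ hστ, hτT⟩
    have hsplit : (∫ r in Ioc 0 τ, A r * (g r : ℂ))
        = (∫ r in Ioc 0 σ, A r * (g r : ℂ)) + ∫ r in Ioc σ τ, A r * (g r : ℂ) := by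
      rw [← Set.Ioc_union_Ioc_eq_Ioc h0σ hστ]
      exact setIntegral_union (Set.Ioc_disjoint_Ioc_of_le le_rfl) measurableSet_Ioc
        (hAgint.mono_set (Set.Ioc_subset_Ioc (le_refl 0) hσI.2))
        (hAgint.mono_set (Set.Ioc_subset_Ioc h0σ hτT))
    rw [heq τ hτI, heq σ hσI, hsplit]
    push_cast
    ring
  -- real part equation
  have hre_eq : ∀ τ ∈ Icc (0:ℝ) T, (φ τ).re = -τ + 2 * ∫ r in Ioc 0 τ, (A r).re * g r := by
    intro τ hτ
    have h1 := congrArg Complex.re (heq τ hτ)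
    have hsubτ : Ioc (0:ℝ) τ ⊆ Ioc 0 T := Set.Ioc_subset_Ioc (le_refl 0) hτ.2
    have h2 : (∫ r in Ioc 0 τ, A r * (g r : ℂ)).re = ∫ r in Ioc 0 τ, (A r).re * g r := by
      have h3 := _root_.integral_re (hAgint.mono_set hsubτ)
      simp only [RCLike.re_to_complex] at h3
      rw [← h3]
      refine integral_congr_ae (Filter.Eventually.of_forall fun s => ?_)
      show (A s * ((g s : ℝ) : ℂ)).re = (A s).re * g s
      rw [mul_comm, Complex.re_ofReal_mul]; ring
    rw [Complex.add_re, Complex.neg_re, Complex.ofReal_re] at h1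
    have h2' : ((2:ℂ) * ∫ s in Ioc 0 τ, A s * (g s : ℂ)).re
        = 2 * ∫ r in Ioc 0 τ, (A r).re * g r := by
      rw [show ((2:ℂ)) = ((2:ℝ):ℂ) from by norm_num, Complex.re_ofReal_mul, h2]
    rw [h1, h2']
  -- v = 2 β²
  have hv2β : ∀ r ∈ Icc (0:ℝ) T, ‖φ r‖ - (φ r).re = 2 * (A r).im ^ 2 := by
    intro r hr
    rw [← (hAsq r hr).1]
    rw [norm_pow, Complex.sq_norm, Complex.normSq_apply, pow_two, Complex.mul_re]
    ring
  have hvnn : ∀ r : ℝ, 0 ≤ ‖φ r‖ - (φ r).re :=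
    fun r => sub_nonneg.2 (Complex.re_le_norm _)
  -- integrability of re φ and α g
  have hφre_int : IntegrableOn (fun s => (φ s).re) (Ioc 0 T) :=
    ((Complex.continuous_re.comp_continuousOn hφc).integrableOn_Icc).mono_set Set.Ioc_subset_Icc_self
  have hαg_int : IntegrableOn (fun s => (A s).re * g s) (Ioc 0 T) := by
    have h4 := hAgint.re
    simp only [RCLike.re_to_complex] at h4
    refine h4.congr (Filter.Eventually.of_forall fun s => ?_)
    show (A s * ((g s : ℝ) : ℂ)).re = (A s).re * g s
    rw [mul_comm, Complex.re_ofReal_mul]; ring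
  -- continuity of v
  have hvcont : ContinuousOn (fun r => ‖φ r‖ - (φ r).re) (Icc 0 T) :=
    (continuous_norm.comp_continuousOn hφc).sub
      (Complex.continuous_re.comp_continuousOn hφc)
  -- main claim: v > 0 on (0, T]
  have hKey : ∀ b ∈ Ioc (0:ℝ) T, ‖φ b‖ - (φ b).re = 0 → False := by
    intro b hb hvb
    by_cases hall : ∀ r ∈ Ioc 0 b, ‖φ r‖ - (φ r).re = 0
    · -- small-time contradiction
      have hβ0 : ∀ r ∈ Ioc (0:ℝ) b, (A r).im = 0 := by
        intro r hr
        have hrI : r ∈ Icc (0:ℝ) T := ⟨le_of_lt hr.1, le_trans hr.2 hb.2⟩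
        have := hv2β r hrI
        rw [hall r hr] at this
        nlinarith [sq_nonneg (A r).im]
      refine smalltime hb.1 hb.2 hg2 hαg_int hφre_int hre_eq ?_
        (exists_small hb.1 hb.2 hg2)
      intro r hr
      have hrI : r ∈ Icc (0:ℝ) T := ⟨le_of_lt hr.1, le_trans hr.2 hb.2⟩
      rw [← (hAsq r hrI).1, pow_two, Complex.mul_re, hβ0 r hr]
      ring
    · push_neg at hall
      obtain ⟨s, hs, hvs⟩ := hall
      have hvspos : 0 < ‖φ s‖ - (φ s).re :=
        lt_of_le_of_ne (hvnn s) (Ne.symm hvs)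
      have hsb : s < b := by
        rcases lt_or_eq_of_le hs.2 with h5 | h5
        · exact h5
        · exfalso; rw [h5] at hvs; exact hvs hvb
      have hsI : s ∈ Icc (0:ℝ) T := ⟨le_of_lt hs.1, le_trans hs.2 hb.2⟩
      set Z := {r : ℝ | r ∈ Icc s b ∧ ‖φ r‖ - (φ r).re = 0} with hZdef
      have hZclosed : IsClosed Z := by
        have h6 : Z = Icc s b ∩ (fun r => ‖φ r‖ - (φ r).re) ⁻¹' {0} := by
          ext r; simp [hZdef]
        rw [h6]
        refine ContinuousOn.preimage_isClosed_of_isClosed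
          (hvcont.mono (Set.Icc_subset_Icc hsI.1 hb.2)) isClosed_Icc isClosed_singleton
      have hZb : b ∈ Z := ⟨⟨le_of_lt hsb, le_refl b⟩, hvb⟩
      have hZne : Z.Nonempty := ⟨b, hZb⟩
      have hZbdd : BddBelow Z := ⟨s, fun x hx => hx.1.1⟩
      set b' := sInf Z with hb'def
      have hb'Z : b' ∈ Z := hZclosed.csInf_mem hZne hZbdd
      have hsb' : s < b' := by
        rcases lt_or_eq_of_le (le_csInf hZne fun x hx => hx.1.1) with h7 | h7
        · exact h7
        · exfalso
          have h7' : b' = s := by rw [hb'def, ← h7]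
          rw [h7'] at hb'Z
          exact hvs hb'Z.2
      have hb'T : b' ≤ T := le_trans hb'Z.1.2 hb.2
      have hpos : ∀ r ∈ Ico s b', ‖φ r‖ - (φ r).re ≠ 0 := by
        intro r hr hr0
        have h8 : b' ≤ r := csInf_le hZbdd ⟨⟨hr.1, le_trans (le_of_lt hr.2) hb'Z.1.2⟩, hr0⟩
        exact absurd hr.2 (not_lt.2 h8)
      have hIcoI : Ico s b' ⊆ Icc (0:ℝ) T :=
        fun r hr => ⟨le_trans hsI.1 hr.1, le_trans (le_of_lt hr.2) hb'T⟩
      have hoff : ∀ r ∈ Ico s b', offPosReal (φ r) := by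
        intro r hr hcon
        exact hpos r hr (by rw [abs_eq_re_of_not_off (not_not.2 hcon)]; ring)
      have hAeq : ∀ r ∈ Ico s b', A r = upSqrt (φ r) := fun r hr =>
        eq_upSqrt (hoff r hr) (hAsq r (hIcoI hr)).1 (hAsq r (hIcoI hr)).2
      have hφne : ∀ r ∈ Ico s b', φ r ≠ 0 := by
        intro r hr hr0
        refine hpos r hr ?_
        rw [hr0]; simp
      -- v s ≤ v τ for all τ ∈ [s, b')
      have hmono : ∀ τ ∈ Ico s b',
          ‖φ s‖ - (φ s).re ≤ ‖φ τ‖ - (φ τ).re := by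
        intro τ hτ
        have hIccsub : Icc s τ ⊆ Ico s b' := fun r hr => ⟨hr.1, lt_of_le_of_lt hr.2 hτ.2⟩
        have hupcont : ContinuousOn A (Icc s τ) := by
          have h9 : ContinuousOn (fun r => upSqrt (φ r)) (Icc s τ) := by
            intro r hr
            exact (continuousAt_upSqrt (hoff r (hIccsub hr))).comp_continuousWithinAt
              ((hφc.mono (fun x hx => hIcoI (hIccsub hx))) r hr)
          exact h9.congr fun r hr => hAeq r (hIccsub hr)
        exact mono_lemma hgabs hAgint hτ.1 hsI.1 (le_trans (le_of_lt hτ.2) hb'T)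
          (fun r hr => hφne r (hIccsub hr))
          (fun r hr => (hAsq r (hIcoI (hIccsub hr))).1)
          (fun σ' τ' hσ' hστ' hτ' => hdiffφ σ' τ' (le_trans hsI.1 hσ') hστ'
            (le_trans hτ' (le_trans (le_of_lt hτ.2) hb'T)))
          hupcont
      -- limit as τ → b'
      have hb'I : b' ∈ Icc (0:ℝ) T := ⟨le_trans hsI.1 (le_of_lt hsb'), hb'T⟩
      have hnb : (𝓝[Ico s b'] b').NeBot := by
        rw [← mem_closure_iff_nhdsWithin_neBot, closure_Ico (ne_of_lt hsb')]
        exact ⟨le_of_lt hsb', le_refl b'⟩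
      have hlim : Tendsto (fun τ => ‖φ τ‖ - (φ τ).re) (𝓝[Ico s b'] b')
          (𝓝 (‖φ b'‖ - (φ b').re)) :=
        ((hvcont b' hb'I).mono hIcoI).tendsto
      have hge : ‖φ s‖ - (φ s).re ≤ ‖φ b'‖ - (φ b').re := by
        refine ge_of_tendsto hlim ?_
        filter_upwards [eventually_mem_nhdsWithin] with τ hτ using hmono τ hτ
      rw [hb'Z.2] at hge
      linarith [hvspos, hge]
  -- conclusion
  intro t ht
  have htI : t ∈ Icc (0:ℝ) T := ⟨le_of_lt ht.1, ht.2⟩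
  have hofft : offPosReal (φ t) := by
    intro hcon
    exact hKey t ht (by rw [abs_eq_re_of_not_off (not_not.2 hcon)]; ring)
  exact ⟨hofft, eq_upSqrt hofft (hAsq t htI).1 (hAsq t htI).2⟩
end

section
/- Let T > 0 and let h ∈ H¹₀([0,T],ℝ). Suppose φ: [0,T] → ℂ is continuous with φ(0) = 0, φ(t) ∈ ℂ \ [0,∞) for all t ∈ (0,T], and φ(t) = −t + 2∫₀^t √(φ(s)) h'(s) ds for all t ∈ [0,T]. Then liminf_{t→0+} Im(√(φ(t)))/√t > 0. -/
open MeasureTheory Set Filter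

lemma upSqrt_sq (z : ℂ) : (upSqrt z) ^ 2 = z := by
  unfold upSqrt
  split_ifs with hb
  · rw [← Complex.ofReal_pow, Real.sq_sqrt hb.2]
    exact (Complex.ext (by simp) (by simp [hb.1])).symm
  · have hz : z ≠ 0 := by
      rintro rfl; exact hb ⟨rfl, le_refl 0⟩
    have h2 : ((1:ℂ)/2) = ((2:ℕ) : ℂ)⁻¹ := by norm_num
    rw [mul_pow, Complex.I_sq, h2]
    rw [show ((-z) ^ (((2:ℕ):ℂ))⁻¹) ^ 2 = ((-z) ^ (((2:ℕ):ℂ))⁻¹) ^ (2:ℕ) by norm_num]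
    rw [Complex.cpow_nat_inv_pow _ (two_ne_zero)]
    ring

lemma abs_upSqrt (z : ℂ) : ‖upSqrt z‖ = Real.sqrt ‖z‖ := by
  have := congrArg norm (upSqrt_sq z)
  rw [norm_pow] at this
  rw [← this, Real.sqrt_sq (norm_nonneg _)]

lemma re_cpow_half_pos {w : ℂ} (hw : 0 < w.re) : 0 < (w ^ ((1:ℂ)/2)).re := by
  have hw0 : w ≠ 0 := by intro h; rw [h] at hw; simp at hw
  rw [Complex.cpow_def_of_ne_zero hw0, Complex.exp_re]
  apply mul_pos (Real.exp_pos _)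
  apply Real.cos_pos_of_mem_Ioo
  have harg : |w.arg| < Real.pi / 2 := by
    rw [Complex.abs_arg_lt_pi_div_two_iff]; left; exact hw
  have : (Complex.log w * (1/2)).im = w.arg / 2 := by
    simp [Complex.log_im]; ring
  rw [this]
  constructor
  · nlinarith [abs_lt.1 harg, Real.pi_pos]
  · nlinarith [abs_lt.1 harg, Real.pi_pos]

lemma im_upSqrt_ge {z : ℂ} {t : ℝ} (ht : 0 < t) (hoff : offPosReal z)
    (hclose : ‖z + t‖ ≤ t / 2) : Real.sqrt t / 2 ≤ (upSqrt z).im := by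
  have hre : t / 2 ≤ (-z).re := by
    have h1 : (z + t).re ≤ ‖z + t‖ := Complex.re_le_norm _
    simp only [Complex.add_re, Complex.ofReal_re] at h1
    simp only [Complex.neg_re]
    linarith
  have hrepos : 0 < (-z).re := lt_of_lt_of_le (by linarith) hre
  have hz0 : (-z) ≠ 0 := by
    intro h; rw [h] at hrepos; simp at hrepos
  set w := (-z) ^ ((1:ℂ)/2) with hw
  have hupeq : upSqrt z = Complex.I * w := by
    unfold upSqrt; rw [if_neg hoff]
  have ha : 0 < w.re := re_cpow_half_pos hrepos
  have hsq : w ^ 2 = -z := by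
    rw [hw, show ((1:ℂ)/2) = ((2:ℕ) : ℂ)⁻¹ by norm_num,
      show ((-z) ^ (((2:ℕ):ℂ))⁻¹) ^ 2 = ((-z) ^ (((2:ℕ):ℂ))⁻¹) ^ (2:ℕ) by norm_num,
      Complex.cpow_nat_inv_pow _ two_ne_zero]
  have hres : w.re ^ 2 - w.im ^ 2 = (-z).re := by
    have := congrArg Complex.re hsq
    simpa [pow_two, Complex.mul_re] using this
  have ha2 : t / 2 ≤ w.re ^ 2 := by nlinarith
  have him : (upSqrt z).im = w.re := by rw [hupeq]; simp
  rw [him]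
  have h1 : Real.sqrt (t/2) ≤ w.re := by
    rw [show w.re = Real.sqrt (w.re ^ 2) by rw [Real.sqrt_sq ha.le]]
    exact Real.sqrt_le_sqrt ha2
  have h2 : Real.sqrt t / 2 ≤ Real.sqrt (t / 2) := by
    have e1 : Real.sqrt t ^ 2 = t := Real.sq_sqrt ht.le
    have e2 : Real.sqrt (t/2) ^ 2 = t/2 := Real.sq_sqrt (by linarith)
    nlinarith [Real.sqrt_nonneg t, Real.sqrt_nonneg (t/2)]
  linarith

lemma key (T : ℝ) (hT : 0 < T) (h : CM T) (φ : ℝ → ℂ) (hφ : IsPhiH T h φ)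
    {t : ℝ} (ht : t ∈ Set.Ioc 0 T)
    (hE : (∫ s in Set.Ioc 0 t, (h.dFun s)^2) ≤ 1/64) :
    ‖φ t + t‖ ≤ t / 2 := by
  obtain ⟨hcont, hphi0, hoff, heq⟩ := hφ
  set d := h.dFun with hd
  set E : ℝ := ∫ s in Set.Ioc 0 t, (d s)^2 with hEdef
  have hEnn : 0 ≤ E := setIntegral_nonneg measurableSet_Ioc (fun s _ => sq_nonneg _)
  have hsub : Set.Ioc 0 t ⊆ Set.Ioc 0 T := Set.Ioc_subset_Ioc_right ht.2
  -- Memℒp of d on Ioc 0 t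
  haveI hfin : IsFiniteMeasure (volume.restrict (Set.Ioc (0:ℝ) t)) := by
    constructor
    rw [Measure.restrict_apply_univ, Real.volume_Ioc]
    exact ENNReal.ofReal_lt_top
  have hmem2 : MemLp d 2 (volume.restrict (Set.Ioc 0 t)) := by
    have := h.memL2.restrict (Set.Ioc 0 t)
    rwa [Measure.restrict_restrict measurableSet_Ioc, Set.inter_eq_left.2 hsub] at this
  have habs : IntegrableOn (fun s => |d s|) (Set.Ioc 0 t) volume := by
    have : MemLp d 1 (volume.restrict (Set.Ioc 0 t)) :=
      hmem2.mono_exponent one_le_two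
    exact (memLp_one_iff_integrable.1 this).abs
  -- Cauchy–Schwarz
  have hCS : (∫ s in Set.Ioc 0 t, |d s|) ≤ Real.sqrt E * Real.sqrt t := by
    have hpq : Real.HolderConjugate 2 2 := Real.HolderConjugate.two_two
    have hf : MemLp (fun s => |d s|) (ENNReal.ofReal 2) (volume.restrict (Set.Ioc 0 t)) := by
      rw [ENNReal.ofReal_ofNat]
      simpa [Real.norm_eq_abs] using hmem2.norm
    have hg : MemLp (fun _ : ℝ => (1:ℝ)) (ENNReal.ofReal 2) (volume.restrict (Set.Ioc 0 t)) :=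
      memLp_const 1
    have := integral_mul_le_Lp_mul_Lq_of_nonneg hpq
      (Filter.Eventually.of_forall (fun s => abs_nonneg (d s)))
      (Filter.Eventually.of_forall (fun _ => zero_le_one)) hf hg
    have e1 : ∀ x:ℝ, |x| ^ (2:ℝ) = x^2 := fun x => by
      rw [show (2:ℝ) = ((2:ℕ):ℝ) by norm_num, Real.rpow_natCast, sq_abs]
    simp only [Real.one_rpow, e1, mul_one] at this
    have hvol : (∫ _ in Set.Ioc 0 t, (1:ℝ)) = t := by
      simp [Real.volume_Ioc, ENNReal.toReal_ofReal ht.1.le, ht.1.le]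
    rw [hvol] at this
    rw [hEdef, Real.sqrt_eq_rpow, Real.sqrt_eq_rpow]
    exact this
  -- maximum of |φ| on [0,t]
  have hKc : IsCompact (Set.Icc (0:ℝ) t) := isCompact_Icc
  have hcont' : ContinuousOn (fun s => ‖φ s‖) (Set.Icc 0 t) :=
    continuous_norm.comp_continuousOn
      (hcont.mono (Set.Icc_subset_Icc_right ht.2))
  obtain ⟨s₀, hs₀mem, hs₀max⟩ := hKc.exists_isMaxOn (Set.nonempty_Icc.2 ht.1.le) hcont'
  set m : ℝ := ‖φ s₀‖ with hm
  have hmnn : 0 ≤ m := norm_nonneg _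
  -- bound on integrals
  have hbnd : ∀ r, r ∈ Set.Icc 0 t →
      ‖∫ s in Set.Ioc 0 r, upSqrt (φ s) * ((d s : ℝ) : ℂ)‖ ≤
        Real.sqrt m * (Real.sqrt E * Real.sqrt t) := by
    intro r hr
    have hsubr : Set.Ioc (0:ℝ) r ⊆ Set.Ioc 0 t := Set.Ioc_subset_Ioc_right hr.2
    have habsr : IntegrableOn (fun s => Real.sqrt m * |d s|) (Set.Ioc 0 r) volume :=
      (habs.mono_set hsubr).const_mul _
    have step1 : ‖∫ s in Set.Ioc 0 r, upSqrt (φ s) * ((d s : ℝ) : ℂ)‖ ≤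
        ∫ s in Set.Ioc 0 r, ‖upSqrt (φ s) * ((d s : ℝ) : ℂ)‖ := by
      exact norm_integral_le_integral_norm _
    have step2 : (∫ s in Set.Ioc 0 r, ‖upSqrt (φ s) * ((d s : ℝ) : ℂ)‖) ≤
        ∫ s in Set.Ioc 0 r, Real.sqrt m * |d s| := by
      apply integral_mono_of_nonneg
      · exact Filter.Eventually.of_forall (fun s => norm_nonneg _)
      · exact habsr
      · filter_upwards [ae_restrict_mem measurableSet_Ioc] with s hs
        have h1 : ‖φ s‖ ≤ m :=
          hs₀max ⟨le_of_lt hs.1, le_trans hs.2 hr.2⟩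
        have h2 : ‖upSqrt (φ s) * ((d s : ℝ) : ℂ)‖ = Real.sqrt ‖φ s‖ * |d s| := by
          rw [norm_mul, abs_upSqrt, Complex.norm_real, Real.norm_eq_abs]
        rw [h2]
        exact mul_le_mul_of_nonneg_right (Real.sqrt_le_sqrt h1) (abs_nonneg _)
    have step3 : (∫ s in Set.Ioc 0 r, Real.sqrt m * |d s|) ≤
        Real.sqrt m * (Real.sqrt E * Real.sqrt t) := by
      rw [integral_const_mul]
      apply mul_le_mul_of_nonneg_left _ (Real.sqrt_nonneg m)
      calc (∫ s in Set.Ioc 0 r, |d s|) ≤ ∫ s in Set.Ioc 0 t, |d s| := by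
            apply setIntegral_mono_set habs
            · exact Filter.Eventually.of_forall (fun s => abs_nonneg _)
            · exact Filter.Eventually.of_forall hsubr
        _ ≤ Real.sqrt E * Real.sqrt t := hCS
    exact le_trans step1 (le_trans step2 step3)
  -- the self-improving bound: m ≤ 2 t
  have hsE : Real.sqrt E ≤ 1/8 := by
    have : Real.sqrt E ≤ Real.sqrt (1/64) := Real.sqrt_le_sqrt hE
    rwa [show (1:ℝ)/64 = (1/8)^2 by norm_num, Real.sqrt_sq (by norm_num : (0:ℝ) ≤ 1/8)] at this
  have hs₀T : s₀ ∈ Set.Icc 0 T := ⟨hs₀mem.1, le_trans hs₀mem.2 ht.2⟩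
  have hmle : m ≤ 2 * t := by
    have h1 : m ≤ s₀ + 2 * (Real.sqrt m * (Real.sqrt E * Real.sqrt t)) := by
      have habs1 : ‖φ s₀‖ ≤ s₀ + 2 * (Real.sqrt m * (Real.sqrt E * Real.sqrt t)) := by
        rw [heq s₀ hs₀T]
        refine le_trans (norm_add_le _ _) ?_
        rw [norm_mul, norm_neg]
        have e1 : ‖(s₀:ℂ)‖ = s₀ := by
          rw [Complex.norm_real, Real.norm_eq_abs, abs_of_nonneg hs₀mem.1]
        have e2 : ‖(2:ℂ)‖ = 2 := by norm_num
        rw [e1, e2]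
        have := hbnd s₀ hs₀mem
        linarith
      exact habs1
    have hsm : Real.sqrt m * Real.sqrt t ≤ (m + t)/2 := by
      nlinarith [Real.sq_sqrt hmnn, Real.sq_sqrt ht.1.le, sq_nonneg (Real.sqrt m - Real.sqrt t)]
    have h2 : m ≤ t + 2 * (Real.sqrt m * ((1/8) * Real.sqrt t)) := by
      have hb : Real.sqrt m * (Real.sqrt E * Real.sqrt t) ≤ Real.sqrt m * ((1/8) * Real.sqrt t) := by
        apply mul_le_mul_of_nonneg_left _ (Real.sqrt_nonneg m)
        exact mul_le_mul_of_nonneg_right hsE (Real.sqrt_nonneg t)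
      linarith [hs₀mem.2]
    nlinarith [Real.sqrt_nonneg m, Real.sqrt_nonneg t]
  -- final bound
  have hsmt : Real.sqrt m ≤ (3/2) * Real.sqrt t := by
    nlinarith [Real.sq_sqrt hmnn, Real.sq_sqrt ht.1.le, Real.sqrt_nonneg m, Real.sqrt_nonneg t]
  have htIcc : t ∈ Set.Icc 0 T := ⟨ht.1.le, ht.2⟩
  have heqt := heq t htIcc
  have hfin2 : φ t + t = 2 * ∫ s in Set.Ioc 0 t, upSqrt (φ s) * ((d s : ℝ) : ℂ) := by
    rw [heqt]; ring
  rw [hfin2, norm_mul, show ‖(2:ℂ)‖ = 2 by norm_num]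
  have := hbnd t (Set.right_mem_Icc.2 ht.1.le)
  have hst : Real.sqrt t * Real.sqrt t = t := Real.mul_self_sqrt ht.1.le
  have c1 : Real.sqrt m * (Real.sqrt E * Real.sqrt t) ≤ (3/2) * Real.sqrt t * ((1/8) * Real.sqrt t) :=
    mul_le_mul hsmt (mul_le_mul_of_nonneg_right hsE (Real.sqrt_nonneg t))
      (by positivity) (by positivity)
  have c2 : (3/2) * Real.sqrt t * ((1/8) * Real.sqrt t) = (3/16) * t := by
    calc (3/2) * Real.sqrt t * ((1/8) * Real.sqrt t) = (3/16) * (Real.sqrt t * Real.sqrt t) := by ring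
      _ = (3/16) * t := by rw [hst]
  linarith

/-- For a solution `φ = φ^h`, one has `liminf_{t→0+} Im(√(φ t))/√t > 0`,
i.e. there is `c > 0` with `Im(√(φ t))/√t ≥ c` for all `t > 0` small enough. -/
theorem stmt1 (T : ℝ) (hT : 0 < T) (h : CM T) (φ : ℝ → ℂ)
    (hφ : IsPhiH T h φ) :
    ∃ c > (0 : ℝ), ∀ᶠ t in nhdsWithin 0 (Set.Ioi 0),
      c ≤ (upSqrt (φ t)).im / Real.sqrt t := by
  have hoff := hφ.2.2.1
  set ν := volume.restrict (Set.Ioc (0:ℝ) T) with hν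
  have hd2 : Integrable (fun s => h.dFun s ^ 2) ν := h.memL2.integrable_sq
  have htend : Tendsto (fun t => ∫ s in Set.Ioc 0 t, h.dFun s ^ 2 ∂ν)
      (nhdsWithin 0 (Set.Ioi 0)) (nhds 0) := by
    apply hd2.tendsto_setIntegral_nhds_zero
    have hb : ∀ t : ℝ, ν (Set.Ioc 0 t) ≤ ENNReal.ofReal t := by
      intro t
      rw [hν, Measure.restrict_apply measurableSet_Ioc]
      refine le_trans (measure_mono Set.inter_subset_left) ?_
      rw [Real.volume_Ioc]
      exact ENNReal.ofReal_le_ofReal (by linarith)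
    have hup : Tendsto (fun t : ℝ => ENNReal.ofReal t) (nhdsWithin 0 (Set.Ioi 0)) (nhds 0) := by
      have h0 : Tendsto (fun t : ℝ => t) (nhdsWithin 0 (Set.Ioi 0)) (nhds 0) :=
        tendsto_id.mono_left nhdsWithin_le_nhds
      simpa using ENNReal.tendsto_ofReal h0
    exact tendsto_of_tendsto_of_tendsto_of_le_of_le tendsto_const_nhds hup
      (fun t => zero_le) hb
  have hev : ∀ᶠ t in nhdsWithin 0 (Set.Ioi 0),
      (∫ s in Set.Ioc 0 t, h.dFun s ^ 2 ∂ν) < 1/64 :=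
    htend.eventually_lt_const (by norm_num)
  refine ⟨1/2, by norm_num, ?_⟩
  filter_upwards [hev, Ioc_mem_nhdsGT_of_mem ⟨le_refl (0:ℝ), hT⟩] with t h1 h2
  have hEeq : (∫ s in Set.Ioc 0 t, h.dFun s ^ 2 ∂ν) = ∫ s in Set.Ioc 0 t, h.dFun s ^ 2 := by
    rw [hν, Measure.restrict_restrict measurableSet_Ioc,
      Set.inter_eq_left.2 (Set.Ioc_subset_Ioc_right h2.2)]
  have hE : (∫ s in Set.Ioc 0 t, (h.dFun s)^2) ≤ 1/64 := by rw [← hEeq]; exact h1.le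
  have hclose := key T hT h φ hφ h2 hE
  have him := im_upSqrt_ge h2.1 (hoff t h2) hclose
  rw [le_div_iff₀ (Real.sqrt_pos.2 h2.1)]
  linarith
end

section
/- Let T > 0 and φ ∈ C₀([0,T],ℂ). Then I(φ) < ∞ if and only if there exists h ∈ H¹₀([0,T],ℝ) with φ = φ^h; moreover, in that case I(φ) = (1/2)∫₀^T h'(r)² dr. -/
open MeasureTheory Set Filter

lemma offPosReal.ne_zero {z : ℂ} (hz : offPosReal z) : z ≠ 0 := by
  rintro rfl; exact hz ⟨rfl, le_refl 0⟩

lemma upSqrt_ne_zero {z : ℂ} (hz : offPosReal z) : upSqrt z ≠ 0 := by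
  rw [upSqrt, if_neg hz]
  refine mul_ne_zero Complex.I_ne_zero ?_
  rw [Ne, Complex.cpow_eq_zero_iff]
  rintro ⟨h1, -⟩
  exact hz.ne_zero (by simpa [neg_eq_zero] using h1)

lemma measurable_upSqrt : Measurable upSqrt := by
  have hs : MeasurableSet {z : ℂ | z.im = 0 ∧ 0 ≤ z.re} :=
    ((Complex.measurable_im (measurableSet_singleton 0)).inter
      (Complex.measurable_re measurableSet_Ici))
  refine Measurable.ite hs ?_ ?_
  · exact Complex.measurable_ofReal.comp
      (Real.continuous_sqrt.measurable.comp Complex.measurable_re)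
  · have : (fun z : ℂ => Complex.I * (-z) ^ ((1:ℂ)/2)) =
        fun z : ℂ => Complex.I *
          (if -z = 0 then 0 else Complex.exp (Complex.log (-z) * ((1:ℂ)/2))) := by
      funext z
      rw [Complex.cpow_def]
      split_ifs with h1 h2
      · norm_num at h2
      · rfl
      · rfl
    rw [this]
    refine measurable_const.mul (Measurable.ite ?_ measurable_const ?_)
    · exact measurable_neg (measurableSet_singleton 0)
    · exact ((Complex.measurable_log.comp measurable_neg).mul_const _).cexp

lemma norm_upSqrt_le {z : ℂ} {M : ℝ} (hM : ‖z‖ ≤ M) :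
    ‖upSqrt z‖ ≤ Real.sqrt M := by
  rw [upSqrt]
  split_ifs with h
  · rw [Complex.norm_real, Real.norm_eq_abs, abs_of_nonneg (Real.sqrt_nonneg _)]
    exact Real.sqrt_le_sqrt ((Complex.re_le_norm z).trans hM)
  · have hz : z ≠ 0 := by rintro rfl; exact h ⟨rfl, le_refl 0⟩
    rw [norm_mul, Complex.norm_I, one_mul,
      Complex.norm_cpow_of_ne_zero (neg_ne_zero.mpr hz)]
    simp only [Complex.div_re, Complex.one_re, Complex.one_im, Complex.div_im]
    norm_num
    rw [Real.sqrt_eq_rpow]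
    refine Real.rpow_le_rpow (norm_nonneg _) (by simpa using hM) (by norm_num)

lemma ae_zero_of_int (T : ℝ) (f : ℝ → ℝ) (hf : IntegrableOn f (Ioc 0 T))
    (h0 : ∀ t ∈ Icc 0 T, (∫ s in Ioc 0 t, f s) = 0) (hT : 0 ≤ T) :
    f =ᵐ[volume.restrict (Ioc 0 T)] 0 := by
  set μ := volume.restrict (Ioc 0 T) with hμ
  -- Step A: integral on any Ioc a b ∩ Ioc 0 T vanishes
  have hA : ∀ a b : ℝ, (∫ s in Ioc a b ∩ Ioc 0 T, f s) = 0 := by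
    intro a b
    rw [Set.Ioc_inter_Ioc]
    set a' := max a 0
    set b' := min b T
    rcases le_or_gt b' a' with hba | hab
    · rw [Set.Ioc_eq_empty (not_lt.mpr hba)]; simp
    · have ha0 : 0 ≤ a' := le_max_right _ _
      have hbT : b' ≤ T := min_le_right _ _
      have hsplit : Ioc 0 a' ∪ Ioc a' b' = Ioc 0 b' :=
        Set.Ioc_union_Ioc_eq_Ioc ha0 hab.le
      have hdisj : Disjoint (Ioc 0 a') (Ioc a' b') := by
        simp [Set.disjoint_left]
        intro x _ hx hax
        exact absurd hax (not_lt.mpr hx)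
      have h1 : IntegrableOn f (Ioc 0 a') := hf.mono_set (Set.Ioc_subset_Ioc le_rfl (hab.le.trans hbT))
      have h2 : IntegrableOn f (Ioc a' b') := hf.mono_set (fun x hx => ⟨lt_of_le_of_lt ha0 hx.1, hx.2.trans hbT⟩)
      have := setIntegral_union hdisj measurableSet_Ioc h1 h2
      rw [hsplit] at this
      have e1 := h0 a' ⟨ha0, hab.le.trans hbT⟩
      have e2 := h0 b' ⟨ha0.trans hab.le, hbT⟩
      rw [e2, e1, zero_add] at this
      exact this.symm
  -- Step B
  set F := fun x => ENNReal.ofReal (f x)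
  set G := fun x => ENNReal.ofReal (-f x)
  have hfm : AEMeasurable f μ := hf.aemeasurable
  have hFm : AEMeasurable F μ := ENNReal.measurable_ofReal.comp_aemeasurable hfm
  have hGm : AEMeasurable G μ := ENNReal.measurable_ofReal.comp_aemeasurable hfm.neg
  have hFbound : ∀ (g : ℝ → ℝ) (s : Set ℝ), IntegrableOn g s →
      (∫⁻ x in s, ENNReal.ofReal (g x) ∂volume) ≠ ⊤ := by
    intro g s hg
    refine ne_top_of_le_ne_top hg.2.ne ?_
    refine lintegral_mono fun x => ?_
    rw [← ofReal_norm_eq_enorm]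
    exact ENNReal.ofReal_le_ofReal (le_abs_self _)
  have hWD : μ.withDensity F = μ.withDensity G := by
    refine Measure.ext_of_Ioc' _ _ ?_ ?_
    · intro a b _
      rw [withDensity_apply _ measurableSet_Ioc, hμ,
        Measure.restrict_restrict measurableSet_Ioc]
      exact hFbound f _ (hf.mono_set Set.inter_subset_right)
    · intro a b _
      rw [withDensity_apply _ measurableSet_Ioc, withDensity_apply _ measurableSet_Ioc, hμ,
        Measure.restrict_restrict measurableSet_Ioc]
      set s := Ioc a b ∩ Ioc 0 T
      have hfs : IntegrableOn f s := hf.mono_set Set.inter_subset_right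
      have hfs' : IntegrableOn (fun x => -f x) s := hfs.neg
      have key := integral_eq_lintegral_pos_part_sub_lintegral_neg_part hfs
      rw [hA a b] at key
      have hFne := hFbound f s hfs
      have hGne := hFbound (fun x => -f x) s hfs'
      have : (∫⁻ x in s, F x ∂volume).toReal = (∫⁻ x in s, G x ∂volume).toReal := by
        linarith [key]
      exact (ENNReal.toReal_eq_toReal_iff' hFne hGne).mp this
  have hae : F =ᵐ[μ] G := (withDensity_eq_iff_of_sigmaFinite hFm hGm).mp hWD
  filter_upwards [hae] with x hx
  by_contra hne
  rcases lt_or_gt_of_ne hne with hlt | hgt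
  · have : F x = 0 := ENNReal.ofReal_eq_zero.mpr hlt.le
    rw [this] at hx
    have := ENNReal.ofReal_eq_zero.mp hx.symm
    simp only [neg_nonpos] at this
    exact absurd (le_antisymm hlt.le this) hne
  · have : G x = 0 := ENNReal.ofReal_eq_zero.mpr (by simpa using hgt.le)
    rw [this] at hx
    have := ENNReal.ofReal_eq_zero.mp hx
    exact absurd (le_antisymm this hgt.le) hne

lemma density_unique (T : ℝ) (hT : 0 ≤ T) {φ : ℝ → ℂ} {d₁ d₂ : ℝ → ℂ}
    (h₁ : IsDensityOn T φ d₁) (h₂ : IsDensityOn T φ d₂) :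
    d₁ =ᵐ[volume.restrict (Ioc 0 T)] d₂ := by
  have hint : IntegrableOn (fun s => d₁ s - d₂ s) (Ioc 0 T) := h₁.1.sub h₂.1
  have hzero : ∀ t ∈ Icc 0 T, (∫ s in Ioc 0 t, (d₁ s - d₂ s)) = 0 := by
    intro t ht
    have hsub : Ioc 0 t ⊆ Ioc 0 T := Set.Ioc_subset_Ioc le_rfl ht.2
    rw [integral_sub (h₁.1.mono_set hsub) (h₂.1.mono_set hsub),
      ← h₁.2 t ht, ← h₂.2 t ht, sub_self]
  have hre := ae_zero_of_int T (fun s => (d₁ s - d₂ s).re)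
    (hint.re) (fun t ht => by
      have := integral_re (hint.mono_set (Set.Ioc_subset_Ioc le_rfl ht.2))
      simp only [RCLike.re_to_complex] at this
      rw [this, hzero t ht]; simp) hT
  have him := ae_zero_of_int T (fun s => (d₁ s - d₂ s).im)
    (hint.im) (fun t ht => by
      have := integral_im (hint.mono_set (Set.Ioc_subset_Ioc le_rfl ht.2))
      simp only [RCLike.im_to_complex] at this
      rw [this, hzero t ht]; simp) hT
  filter_upwards [hre, him] with x hx1 hx2
  have : d₁ x - d₂ x = 0 := Complex.ext (by simpa using hx1) (by simpa using hx2)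
  exact sub_eq_zero.mp this

instance (t : ℝ) : IsFiniteMeasure (volume.restrict (Ioc (0:ℝ) t)) :=
  ⟨by rw [Measure.restrict_apply_univ]; exact measure_Ioc_lt_top⟩

lemma integrable_sqrt_mul {T : ℝ} (φ : ℝ → ℂ) (hφc : ContinuousOn φ (Icc 0 T))
    {g : ℝ → ℝ} (hg : MemLp g 2 (volume.restrict (Ioc 0 T))) {t : ℝ} (ht : t ∈ Icc 0 T) :
    IntegrableOn (fun s => upSqrt (φ s) * (g s : ℂ)) (Ioc 0 t) := by
  have hsub : Ioc 0 t ⊆ Icc 0 T := fun x hx => ⟨hx.1.le, hx.2.trans ht.2⟩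
  have hgint : Integrable (fun s => (g s : ℂ)) (volume.restrict (Ioc 0 t)) :=
    ((hg.mono_measure (Measure.restrict_mono (Ioc_subset_Ioc le_rfl ht.2) le_rfl)).integrable
      one_le_two).ofReal
  have hmeas : AEStronglyMeasurable (fun s => upSqrt (φ s)) (volume.restrict (Ioc 0 t)) :=
    (measurable_upSqrt.comp_aemeasurable
      ((hφc.mono hsub).aemeasurable measurableSet_Ioc)).aestronglyMeasurable
  obtain ⟨M, hM⟩ := (isCompact_Icc (a := (0:ℝ)) (b := T)).exists_bound_of_continuousOn hφc
  refine Integrable.bdd_mul (c := Real.sqrt M) hgint hmeas ?_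
  filter_upwards [ae_restrict_mem measurableSet_Ioc] with s hs
  exact norm_upSqrt_le (hM _ (hsub hs))

lemma integral_d0 {T : ℝ} (φ : ℝ → ℂ) (hφc : ContinuousOn φ (Icc 0 T))
    {g : ℝ → ℝ} (hg : MemLp g 2 (volume.restrict (Ioc 0 T))) {t : ℝ} (ht : t ∈ Icc 0 T) :
    (∫ s in Ioc 0 t, (-1 + 2 * (upSqrt (φ s) * (g s : ℂ)))) =
      -(t:ℂ) + 2 * ∫ s in Ioc 0 t, upSqrt (φ s) * (g s : ℂ) := by
  rw [integral_add (integrable_const _) ((integrable_sqrt_mul φ hφc hg ht).const_mul 2),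
    integral_const, MeasureTheory.integral_const_mul]
  congr 1
  rw [measureReal_restrict_apply_univ, Real.volume_real_Ioc_of_le ht.1, sub_zero]
  rw [Complex.real_smul]
  push_cast
  ring

def Adm (T : ℝ) (φ : ℝ → ℂ) (d : ℝ → ℂ) : Prop :=
  IsDensityOn T φ d ∧
  (∀ t ∈ Set.Ioc 0 T, offPosReal (φ t)) ∧
  (∀ᵐ t ∂(MeasureTheory.volume.restrict (Set.Ioc 0 T)),
    ((d t + 1) / (2 * upSqrt (φ t))).im = 0) ∧
  MeasureTheory.MemLp (fun t => ((d t + 1) / (2 * upSqrt (φ t))).re) 2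
    (MeasureTheory.volume.restrict (Set.Ioc 0 T))

noncomputable def Vfun (T : ℝ) (φ d : ℝ → ℂ) : ENNReal :=
  ∫⁻ t in Set.Ioc 0 T, ENNReal.ofReal ((((d t + 1) / (2 * upSqrt (φ t))).re) ^ 2 / 2)

lemma rateI_eq (T : ℝ) (φ : ℝ → ℂ) :
    rateI T φ = ⨅ (d : ℝ → ℂ) (_ : Adm T φ d), Vfun T φ d := rfl

lemma d0_simp {T : ℝ} {φ : ℝ → ℂ} (hoff : ∀ t ∈ Set.Ioc 0 T, offPosReal (φ t))
    (g : ℝ → ℝ) {t : ℝ} (ht : t ∈ Ioc 0 T) :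
    ((-1 + 2 * (upSqrt (φ t) * (g t : ℂ))) + 1) / (2 * upSqrt (φ t)) = (g t : ℂ) := by
  have hne : (2 : ℂ) * upSqrt (φ t) ≠ 0 :=
    mul_ne_zero two_ne_zero (upSqrt_ne_zero (hoff t ht))
  rw [div_eq_iff hne]; ring

lemma adm_d0 {T : ℝ} (hT : 0 < T) {φ : ℝ → ℂ} (h : CM T) (hφ : IsPhiH T h φ) :
    Adm T φ (fun s => -1 + 2 * (upSqrt (φ s) * (h.dFun s : ℂ))) := by
  obtain ⟨hφc, hφ0, hoff, heq⟩ := hφ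
  refine ⟨⟨?_, ?_⟩, hoff, ?_, ?_⟩
  · exact (integrable_const _).add
      (((integrable_sqrt_mul φ hφc h.memL2 (right_mem_Icc.mpr hT.le)).const_mul 2))
  · intro t ht
    rw [heq t ht, ← integral_d0 φ hφc h.memL2 ht]
  · filter_upwards [ae_restrict_mem measurableSet_Ioc] with t ht
    rw [d0_simp hoff h.dFun ht, Complex.ofReal_im]
  · refine h.memL2.ae_eq ?_
    filter_upwards [ae_restrict_mem measurableSet_Ioc] with t ht
    rw [d0_simp hoff h.dFun ht, Complex.ofReal_re]

lemma value_eq {T : ℝ} (hT : 0 < T) {φ : ℝ → ℂ} (h : CM T) (hφ : IsPhiH T h φ)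
    {d : ℝ → ℂ} (hd : Adm T φ d) :
    Vfun T φ d = ENNReal.ofReal ((1 / 2) * ∫ r in Set.Ioc 0 T, (h.dFun r) ^ 2) := by
  have hadm0 := adm_d0 hT h hφ
  have hae := density_unique T hT.le hd.1 hadm0.1
  have he : ∀ᵐ t ∂(volume.restrict (Ioc 0 T)),
      ((d t + 1) / (2 * upSqrt (φ t))).re = h.dFun t := by
    filter_upwards [hae, ae_restrict_mem measurableSet_Ioc] with t h1 h2
    rw [h1, d0_simp hφ.2.2.1 h.dFun h2, Complex.ofReal_re]
  have step1 : Vfun T φ d = ∫⁻ t in Ioc 0 T, ENNReal.ofReal ((h.dFun t) ^ 2 / 2) := by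
    refine lintegral_congr_ae ?_
    filter_upwards [he] with t ht
    rw [ht]
  rw [step1, ← ofReal_integral_eq_lintegral_ofReal
      (h.memL2.integrable_sq.div_const 2)
      (Filter.Eventually.of_forall fun t => by positivity)]
  rw [integral_div]
  congr 1
  ring

lemma exists_h {T : ℝ} (hT : 0 < T) {φ : ℝ → ℂ} (hφc : ContinuousOn φ (Icc 0 T))
    (hφ0 : φ 0 = 0) {d : ℝ → ℂ} (hd : Adm T φ d) : ∃ h : CM T, IsPhiH T h φ := by
  obtain ⟨⟨hint, heq⟩, hoff, him, hL2⟩ := hd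
  set e := fun t => ((d t + 1) / (2 * upSqrt (φ t))).re with he
  have hesm := hL2.1
  set g := hesm.mk e with hg
  have hgm : Measurable g := hesm.stronglyMeasurable_mk.measurable
  have hge : e =ᵐ[volume.restrict (Ioc 0 T)] g := hesm.ae_eq_mk
  have hgL2 : MemLp g 2 (volume.restrict (Ioc 0 T)) := hL2.ae_eq hge
  refine ⟨⟨fun t => ∫ s in Ioc 0 t, g s, g, hgm, hgL2, fun t _ => rfl⟩, hφc, hφ0, hoff, ?_⟩
  intro t ht
  have key : ∀ᵐ s ∂(volume.restrict (Ioc 0 T)),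
      d s = -1 + 2 * (upSqrt (φ s) * ((g s : ℝ) : ℂ)) := by
    filter_upwards [him, hge, ae_restrict_mem measurableSet_Ioc] with s h1 h2 h3
    have hne : (2 : ℂ) * upSqrt (φ s) ≠ 0 :=
      mul_ne_zero two_ne_zero (upSqrt_ne_zero (hoff s h3))
    have hw : (d s + 1) / (2 * upSqrt (φ s)) = ((e s : ℝ) : ℂ) := by
      apply Complex.ext
      · simp [he]
      · simpa using h1
    calc d s = (d s + 1) - 1 := by ring
      _ = (2 * upSqrt (φ s)) * ((d s + 1) / (2 * upSqrt (φ s))) - 1 := by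
          rw [mul_div_cancel₀ _ hne]
      _ = -1 + 2 * (upSqrt (φ s) * ((g s : ℝ) : ℂ)) := by
          rw [hw, h2]; ring
  have hsub : Ioc 0 t ⊆ Ioc 0 T := Ioc_subset_Ioc le_rfl ht.2
  rw [heq t ht, integral_congr_ae (ae_restrict_of_ae_restrict_of_subset hsub key),
    integral_d0 φ hφc hgL2 ht]

/-- `I(φ) < ∞` iff `φ = φ^h` for some `h ∈ H¹₀([0,T],ℝ)`, in which case
`I(φ) = ½ ∫₀ᵀ h'(r)² dr`. -/
theorem stmt5 (T : ℝ) (hT : 0 < T) (φ : ℝ → ℂ)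
    (hφc : ContinuousOn φ (Set.Icc 0 T)) (hφ0 : φ 0 = 0) :
    (rateI T φ < ⊤ ↔ ∃ h : CM T, IsPhiH T h φ) ∧
    (∀ h : CM T, IsPhiH T h φ →
      rateI T φ = ENNReal.ofReal ((1 / 2) * ∫ r in Set.Ioc 0 T, (h.dFun r) ^ 2)) := by
  have main : ∀ h : CM T, IsPhiH T h φ →
      rateI T φ = ENNReal.ofReal ((1 / 2) * ∫ r in Set.Ioc 0 T, (h.dFun r) ^ 2) := by
    intro h hφh
    rw [rateI_eq]
    apply le_antisymm
    · refine iInf_le_of_le (fun s => -1 + 2 * (upSqrt (φ s) * (h.dFun s : ℂ))) ?_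
      rw [iInf_pos (adm_d0 hT h hφh), value_eq hT h hφh (adm_d0 hT h hφh)]
    · exact le_iInf fun d => le_iInf fun hd => (value_eq hT h hφh hd).ge
  refine ⟨⟨?_, ?_⟩, main⟩
  · intro hlt
    have hex : ∃ d, Adm T φ d := by
      by_contra hno
      push_neg at hno
      rw [rateI_eq] at hlt
      have : (⨅ (d : ℝ → ℂ) (_ : Adm T φ d), Vfun T φ d) = ⊤ := by
        rw [iInf_eq_top]
        intro d
        exact iInf_neg (hno d)
      rw [this] at hlt
      exact absurd hlt (lt_irrefl _)
    obtain ⟨d, hd⟩ := hex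
    exact exists_h hT hφc hφ0 hd
  · rintro ⟨h, hφh⟩
    rw [main h hφh]
    exact ENNReal.ofReal_lt_top
end

section
/- Let T > 0 and let α, β: [0,T] → ℝ be continuous with α(0) = β(0) = 0 and β nonnegative. Assume that sup over f ∈ C¹([0,T],ℝ) of { f(T)α(T) − ∫₀^T α(r) f'(r) dr − (1/2)∫₀^T f(r)² β(r) dr } is finite. Then α is absolutely continuous and there exists a measurable function k: [0,T] → ℝ such that ∫₀^T k(r)² β(r) dr < ∞ and α'(t) = k(t)β(t) for Lebesgue-almost every t ∈ [0,T]. -/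
open MeasureTheory Set Filter
open scoped NNReal ENNReal

set_option maxHeartbeats 4000000 in
/-- If `sup_{f ∈ C¹} { ∫₀ᵀ f dα − ½∫₀ᵀ f² β } < ∞` (Stieltjes integral in
integration-by-parts form), then `α` is absolutely continuous with `α' = kβ` a.e. for a
measurable `k` with `∫₀ᵀ k² β < ∞`; equivalently `α t = ∫₀ᵗ k β`. -/
theorem stmt10 (T : ℝ) (hT : 0 < T) (α β : ℝ → ℝ)
    (hαc : ContinuousOn α (Set.Icc 0 T)) (hβc : ContinuousOn β (Set.Icc 0 T))
    (hα0 : α 0 = 0) (hβ0 : β 0 = 0) (hβ : ∀ t ∈ Set.Icc 0 T, 0 ≤ β t)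
    (hbdd : BddAbove {x : ℝ | ∃ f : ℝ → ℝ, ContDiff ℝ 1 f ∧
      x = f T * α T - (∫ r in Set.Ioc 0 T, α r * deriv f r)
          - (1 / 2) * ∫ r in Set.Ioc 0 T, (f r) ^ 2 * β r}) :
    ∃ k : ℝ → ℝ, Measurable k ∧
      (∫⁻ r in Set.Ioc 0 T, ENNReal.ofReal ((k r) ^ 2 * β r)) < ⊤ ∧
      ∀ t ∈ Set.Icc 0 T, α t = ∫ s in Set.Ioc 0 t, k s * β s := by
  classical
  -- a measurable, nonnegative a.e.-version of β
  have hβae : AEMeasurable β (volume.restrict (Set.Icc 0 T)) :=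
    hβc.aemeasurable measurableSet_Icc
  set B : ℝ → ℝ := fun r => max (hβae.mk β r) 0 with hBdef
  have hBmeas : Measurable B := hβae.measurable_mk.max measurable_const
  have hBnonneg : ∀ r, 0 ≤ B r := fun r => le_max_right _ _
  have hBae : ∀ᵐ r ∂(volume.restrict (Set.Ioc 0 T)), B r = β r := by
    have h1 : ∀ᵐ r ∂(volume.restrict (Set.Ioc 0 T)), β r = hβae.mk β r :=
      ae_restrict_of_ae_restrict_of_subset Set.Ioc_subset_Icc_self hβae.ae_eq_mk
    have h2 : ∀ᵐ r ∂(volume.restrict (Set.Ioc 0 T)), r ∈ Set.Ioc 0 T :=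
      ae_restrict_mem measurableSet_Ioc
    filter_upwards [h1, h2] with r hr1 hr2
    have h0 : 0 ≤ β r := hβ r (Set.Ioc_subset_Icc_self hr2)
    rw [hBdef]; simp only [← hr1]; exact max_eq_left h0
  set d : ℝ → ℝ≥0 := fun r => (B r).toNNReal with hddef
  have hdmeas : Measurable d := hBmeas.real_toNNReal
  set μ : Measure ℝ :=
    (volume.restrict (Set.Ioc 0 T)).withDensity (fun r => (d r : ℝ≥0∞)) with hμdef
  -- μ is a finite measure
  obtain ⟨Cβ, hCβ⟩ := isCompact_Icc.exists_bound_of_continuousOn hβc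
  have hμfin : IsFiniteMeasure μ := by
    constructor
    rw [hμdef, withDensity_apply _ MeasurableSet.univ, Measure.restrict_univ]
    have hle : ∀ᵐ r ∂(volume.restrict (Set.Ioc 0 T)),
        (d r : ℝ≥0∞) ≤ ENNReal.ofReal Cβ := by
      have h2 : ∀ᵐ r ∂(volume.restrict (Set.Ioc 0 T)), r ∈ Set.Ioc 0 T :=
        ae_restrict_mem measurableSet_Ioc
      filter_upwards [hBae, h2] with r hr1 hr2
      have : B r ≤ Cβ := by
        rw [hr1]
        exact le_trans (le_abs_self _) (hCβ r (Set.Ioc_subset_Icc_self hr2))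
      calc (d r : ℝ≥0∞) = ENNReal.ofReal (B r) := rfl
        _ ≤ ENNReal.ofReal Cβ := ENNReal.ofReal_le_ofReal this
    calc ∫⁻ r, (d r : ℝ≥0∞) ∂(volume.restrict (Set.Ioc 0 T))
        ≤ ∫⁻ _, ENNReal.ofReal Cβ ∂(volume.restrict (Set.Ioc 0 T)) := lintegral_mono_ae hle
      _ = ENNReal.ofReal Cβ * volume (Set.Ioc 0 T) := by
          rw [lintegral_const, Measure.restrict_apply_univ]
      _ < ⊤ := ENNReal.mul_lt_top ENNReal.ofReal_lt_top (by simp [Real.volume_Ioc])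
  haveI := hμfin
  have haeIoc : ∀ᵐ x ∂μ, x ∈ Set.Ioc 0 T := by
    rw [hμdef]
    exact (ae_restrict_mem measurableSet_Ioc).filter_mono
      (withDensity_absolutelyContinuous _ _).ae_le
  -- continuous functions are in L²(μ)
  have memC : ∀ f : ℝ → ℝ, Continuous f → MemLp f 2 μ := by
    intro f hf
    obtain ⟨C, hC⟩ := isCompact_Icc.exists_bound_of_continuousOn
      (hf.continuousOn : ContinuousOn f (Set.Icc 0 T))
    exact MemLp.of_bound hf.measurable.aestronglyMeasurable C
      (haeIoc.mono fun x hx => hC x (Set.Ioc_subset_Icc_self hx))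
  -- norm squared in L²(μ)
  have normsq : ∀ (f : ℝ → ℝ) (hf : MemLp f 2 μ),
      ‖hf.toLp f‖ ^ 2 = ∫ r, f r ^ 2 ∂μ := by
    intro f hf
    rw [← real_inner_self_eq_norm_sq, MeasureTheory.L2.inner_def]
    refine integral_congr_ae ?_
    filter_upwards [hf.coeFn_toLp] with a ha
    rw [RCLike.inner_apply, conj_trivial, ha, sq]
  -- integrals with respect to μ
  have intμ : ∀ f : ℝ → ℝ, (∫ r, f r ∂μ) = ∫ r in Set.Ioc 0 T, β r * f r := by
    intro f
    rw [hμdef, integral_withDensity_eq_integral_smul hdmeas]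
    refine integral_congr_ae ?_
    filter_upwards [hBae] with r hr
    rw [hddef, NNReal.smul_def, Real.coe_toNNReal _ (hBnonneg r), hr, smul_eq_mul]
  -- the linear functional A and the key quadratic inequality
  obtain ⟨M, hM⟩ := hbdd
  set A : (ℝ → ℝ) → ℝ :=
    fun f => f T * α T - ∫ r in Set.Ioc 0 T, α r * deriv f r with hAdef
  have hSmem : ∀ f : ℝ → ℝ, ContDiff ℝ 1 f →
      A f - (1 / 2) * ∫ r in Set.Ioc 0 T, f r ^ 2 * β r ≤ M :=
    fun f hf => hM ⟨f, hf, by rw [hAdef]⟩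
  have hM0 : 0 ≤ M := by
    have := hSmem (fun _ => 0) contDiff_const
    simp only [hAdef] at this
    simpa using this
  have hIntd : ∀ f : ℝ → ℝ, ContDiff ℝ 1 f →
      IntegrableOn (fun r => α r * deriv f r) (Set.Ioc 0 T) volume :=
    fun f hf => ((hαc.mul ((hf.continuous_deriv le_rfl).continuousOn)).integrableOn_Icc).mono_set
      Set.Ioc_subset_Icc_self
  have key : ∀ f : ℝ → ℝ, ContDiff ℝ 1 f →
      (A f) ^ 2 ≤ 2 * M * ∫ r in Set.Ioc 0 T, f r ^ 2 * β r := by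
    intro f hf
    set b := ∫ r in Set.Ioc 0 T, f r ^ 2 * β r with hbdef
    have hb0 : 0 ≤ b := setIntegral_nonneg measurableSet_Ioc fun r hr =>
      mul_nonneg (sq_nonneg _) (hβ r (Set.Ioc_subset_Icc_self hr))
    have hdiff : Differentiable ℝ f := hf.differentiable one_ne_zero
    have hc : ∀ c : ℝ, c * A f - c ^ 2 / 2 * b ≤ M := by
      intro c
      have h1 := hSmem (fun r => c * f r) (contDiff_const.mul hf)
      have hderiv : ∀ r, deriv (fun x => c * f x) r = c * deriv f r := fun r =>
        deriv_const_mul c (hdiff r)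
      have e1 : (∫ r in Set.Ioc 0 T, α r * deriv (fun x => c * f x) r)
          = c * ∫ r in Set.Ioc 0 T, α r * deriv f r := by
        rw [← integral_const_mul]
        refine integral_congr_ae (Filter.Eventually.of_forall fun r => ?_)
        show α r * deriv (fun x => c * f x) r = c * (α r * deriv f r)
        rw [hderiv r]; ring
      have e2 : (∫ r in Set.Ioc 0 T, (fun r => c * f r) r ^ 2 * β r) = c ^ 2 * b := by
        rw [hbdef, ← integral_const_mul]
        refine integral_congr_ae (Filter.Eventually.of_forall fun r => ?_)
        show (c * f r) ^ 2 * β r = c ^ 2 * (f r ^ 2 * β r)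
        ring
      have e3 : c * A f - c ^ 2 / 2 * b
          = A (fun r => c * f r) - (1 / 2) * ∫ r in Set.Ioc 0 T, (fun r => c * f r) r ^ 2 * β r := by
        simp only [hAdef]
        rw [e1, e2]
        ring
      rw [e3]; exact h1
    rcases hb0.eq_or_lt with hb | hb
    · have hA0 : A f = 0 := by
        by_contra hA
        have h1 := hc ((M + 1) / A f)
        rw [div_mul_cancel₀ _ hA, ← hb] at h1
        simp only [mul_zero, sub_zero] at h1
        linarith
      rw [hA0, ← hb]
      simp
    · have hcc := hc (A f / b)
      have e : A f / b * A f - (A f / b) ^ 2 / 2 * b = A f ^ 2 / (2 * b) := by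
        field_simp
        ring
      rw [e, div_le_iff₀ (by positivity)] at hcc
      have : M * (2 * b) = 2 * M * b := by ring
      linarith
  -- the submodule of C¹ functions and associated linear maps
  set Dsub : Submodule ℝ (ℝ → ℝ) :=
    { carrier := {f | ContDiff ℝ 1 f}
      add_mem' := fun {a b} (hf : ContDiff ℝ 1 a) (hg : ContDiff ℝ 1 b) => hf.add hg
      zero_mem' := by show ContDiff ℝ 1 (0 : ℝ → ℝ); exact contDiff_const
      smul_mem' := fun c a (hf : ContDiff ℝ 1 a) => hf.const_smul c } with hDdef
  have hmemD : ∀ f : Dsub, ContDiff ℝ 1 (f : ℝ → ℝ) := fun f => f.2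
  set Pl : Dsub →ₗ[ℝ] (Lp ℝ 2 μ) :=
    { toFun := fun f => MemLp.toLp (f : ℝ → ℝ) (memC _ (hmemD f).continuous)
      map_add' := fun f g => by
        exact MemLp.toLp_add (memC _ (hmemD f).continuous) (memC _ (hmemD g).continuous)
      map_smul' := fun c f => by
        exact MemLp.toLp_const_smul c (memC _ (hmemD f).continuous) } with hPldef
  have hAadd : ∀ f g : ℝ → ℝ, ContDiff ℝ 1 f → ContDiff ℝ 1 g → A (f + g) = A f + A g := by
    intro f g hf hg
    have hdf := hf.differentiable one_ne_zero
    have hdg := hg.differentiable one_ne_zero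
    have e : (∫ r in Set.Ioc 0 T, α r * deriv (f + g) r)
        = (∫ r in Set.Ioc 0 T, α r * deriv f r) + ∫ r in Set.Ioc 0 T, α r * deriv g r := by
      rw [← integral_add (hIntd f hf) (hIntd g hg)]
      refine integral_congr_ae (Filter.Eventually.of_forall fun r => ?_)
      show α r * deriv (f + g) r = α r * deriv f r + α r * deriv g r
      have : deriv (f + g) r = deriv f r + deriv g r := by
        simpa using deriv_add (hdf r) (hdg r)
      rw [this]; ring
    simp only [hAdef, Pi.add_apply]
    rw [e]; ring
  have hAsmul : ∀ (c : ℝ) (f : ℝ → ℝ), ContDiff ℝ 1 f → A (c • f) = c * A f := by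
    intro c f hf
    have hdf := hf.differentiable one_ne_zero
    have e : (∫ r in Set.Ioc 0 T, α r * deriv (c • f) r)
        = c * ∫ r in Set.Ioc 0 T, α r * deriv f r := by
      rw [← integral_const_mul]
      refine integral_congr_ae (Filter.Eventually.of_forall fun r => ?_)
      show α r * deriv (c • f) r = c * (α r * deriv f r)
      have : deriv (c • f) r = c * deriv f r := deriv_const_smul c (hdf r)
      rw [this]; ring
    simp only [hAdef, Pi.smul_apply, smul_eq_mul]
    rw [e]; ring
  set Al : Dsub →ₗ[ℝ] ℝ :=
    { toFun := fun f => A (f : ℝ → ℝ)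
      map_add' := fun f g => hAadd _ _ (hmemD f) (hmemD g)
      map_smul' := fun c f => by simpa using hAsmul c _ (hmemD f) } with hAldef
  -- the key inequality in L² norm form
  have keyN : ∀ f : Dsub, |Al f| ≤ Real.sqrt (2 * M) * ‖Pl f‖ := by
    intro f
    have h1 := key _ (hmemD f)
    have h2 : ‖Pl f‖ ^ 2 = ∫ r in Set.Ioc 0 T, (f : ℝ → ℝ) r ^ 2 * β r := by
      have e0 : ‖Pl f‖ = ‖MemLp.toLp ((f : ℝ → ℝ)) (memC _ (hmemD f).continuous)‖ := rfl
      rw [e0, normsq _ _, intμ (fun r => (f : ℝ → ℝ) r ^ 2)]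
      exact integral_congr_ae (Filter.Eventually.of_forall fun r => mul_comm _ _)
    calc |Al f| = Real.sqrt ((A (f : ℝ → ℝ)) ^ 2) := (Real.sqrt_sq_eq_abs _).symm
      _ ≤ Real.sqrt (2 * M * ‖Pl f‖ ^ 2) := Real.sqrt_le_sqrt (by rw [h2]; exact h1)
      _ = Real.sqrt (2 * M) * ‖Pl f‖ := by
          rw [Real.sqrt_mul (by positivity), Real.sqrt_sq (norm_nonneg _)]
  have hwd : ∀ f g : Dsub, Pl f = Pl g → Al f = Al g := by
    intro f g h
    have h0 : Pl (f - g) = 0 := by rw [map_sub, h, sub_self]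
    have h2 := keyN (f - g)
    rw [h0, norm_zero, mul_zero] at h2
    have h3 : Al (f - g) = 0 := abs_eq_zero.mp (le_antisymm h2 (abs_nonneg _))
    rw [map_sub] at h3
    linarith
  -- the bounded linear functional on the range of Pl, extended by Hahn–Banach
  set p : Submodule ℝ (Lp ℝ 2 μ) := LinearMap.range Pl with hpdef
  have hsel : ∀ x : p, Pl (LinearMap.mem_range.mp x.2).choose = (x : Lp ℝ 2 μ) :=
    fun x => (LinearMap.mem_range.mp x.2).choose_spec
  have g0add : ∀ x y : p, Al (LinearMap.mem_range.mp (x + y).2).choose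
      = Al (LinearMap.mem_range.mp x.2).choose + Al (LinearMap.mem_range.mp y.2).choose := by
    intro x y
    have h : Pl (LinearMap.mem_range.mp (x + y).2).choose
        = Pl ((LinearMap.mem_range.mp x.2).choose + (LinearMap.mem_range.mp y.2).choose) := by
      calc Pl (LinearMap.mem_range.mp (x + y).2).choose = ((x + y : p) : Lp ℝ 2 μ) := hsel _
        _ = (x : Lp ℝ 2 μ) + (y : Lp ℝ 2 μ) := rfl
        _ = Pl (LinearMap.mem_range.mp x.2).choose + Pl (LinearMap.mem_range.mp y.2).choose := by
            rw [hsel, hsel]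
        _ = Pl ((LinearMap.mem_range.mp x.2).choose + (LinearMap.mem_range.mp y.2).choose) :=
            (Pl.map_add _ _).symm
    exact (hwd _ _ h).trans (Al.map_add _ _)
  have g0smul : ∀ (c : ℝ) (x : p), Al (LinearMap.mem_range.mp (c • x).2).choose
      = c • Al (LinearMap.mem_range.mp x.2).choose := by
    intro c x
    have h : Pl (LinearMap.mem_range.mp (c • x).2).choose
        = Pl (c • (LinearMap.mem_range.mp x.2).choose) := by
      calc Pl (LinearMap.mem_range.mp (c • x).2).choose = ((c • x : p) : Lp ℝ 2 μ) := hsel _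
        _ = c • (x : Lp ℝ 2 μ) := rfl
        _ = c • Pl (LinearMap.mem_range.mp x.2).choose := by rw [hsel]
        _ = Pl (c • (LinearMap.mem_range.mp x.2).choose) := (Pl.map_smul c _).symm
    exact (hwd _ _ h).trans (Al.map_smul c _)
  set g0 : p →ₗ[ℝ] ℝ :=
    { toFun := fun x => Al (LinearMap.mem_range.mp x.2).choose
      map_add' := g0add
      map_smul' := g0smul } with hg0def
  have g0bound : ∀ x : p, ‖g0 x‖ ≤ Real.sqrt (2 * M) * ‖x‖ := by
    intro x
    have h1 := keyN (LinearMap.mem_range.mp x.2).choose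
    rw [hsel x] at h1
    simpa [hg0def, Real.norm_eq_abs] using h1
  obtain ⟨Φ, hΦext, -⟩ :=
    exists_extension_norm_eq p (LinearMap.mkContinuous g0 (Real.sqrt (2 * M)) g0bound)
  have hΦP : ∀ f : Dsub, Φ (Pl f) = A (f : ℝ → ℝ) := by
    intro f
    have hmem : Pl f ∈ p := LinearMap.mem_range_self Pl f
    have h1 := hΦext ⟨Pl f, hmem⟩
    rw [LinearMap.mkContinuous_apply] at h1
    rw [show ((⟨Pl f, hmem⟩ : p) : Lp ℝ 2 μ) = Pl f from rfl] at h1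
    rw [h1]
    exact hwd _ f (hsel ⟨Pl f, hmem⟩)
  -- Riesz representation
  obtain ⟨y, hy⟩ := (InnerProductSpace.toDual ℝ (Lp ℝ 2 μ)).surjective Φ
  have hyΦ : ∀ x : Lp ℝ 2 μ, Φ x = (inner ℝ y x : ℝ) := by
    intro x
    rw [← hy]
    exact InnerProductSpace.toDual_apply_apply
  -- the density k
  have hym : AEMeasurable (y : ℝ → ℝ) μ := (Lp.aestronglyMeasurable y).aemeasurable
  set k : ℝ → ℝ := hym.mk _ with hkdef
  have hkmeas : Measurable k := hym.measurable_mk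
  have hky : (y : ℝ → ℝ) =ᵐ[μ] k := hym.ae_eq_mk
  have hkmem : MemLp k 2 μ := (Lp.memLp y).ae_eq hky
  have hint2 : Integrable (fun r => k r ^ 2) μ := hkmem.integrable_sq
  have hfin : (∫⁻ r, ENNReal.ofReal (k r ^ 2) ∂μ) < ⊤ := hint2.lintegral_lt_top
  refine ⟨k, hkmeas, ?_, ?_⟩
  · -- finiteness of ∫ k² β
    have e1 : ∀ᵐ r ∂(volume.restrict (Set.Ioc 0 T)),
        ENNReal.ofReal (k r ^ 2 * β r)
          = ((fun r => (d r : ℝ≥0∞)) * fun r => ENNReal.ofReal (k r ^ 2)) r := by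
      filter_upwards [hBae] with r hr
      show ENNReal.ofReal (k r ^ 2 * β r) = (d r : ℝ≥0∞) * ENNReal.ofReal (k r ^ 2)
      rw [ENNReal.ofReal_mul (sq_nonneg _), ← hr, mul_comm]
      rfl
    calc (∫⁻ r in Set.Ioc 0 T, ENNReal.ofReal (k r ^ 2 * β r))
        = ∫⁻ r, ((fun r => (d r : ℝ≥0∞)) * fun r => ENNReal.ofReal (k r ^ 2)) r
            ∂(volume.restrict (Set.Ioc 0 T)) := lintegral_congr_ae e1
      _ = ∫⁻ r, ENNReal.ofReal (k r ^ 2) ∂μ := by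
          rw [hμdef]
          exact (lintegral_withDensity_eq_lintegral_mul _ hdmeas.coe_nnreal_ennreal
            ((hkmeas.pow_const 2).ennreal_ofReal)).symm
      _ < ⊤ := hfin
  · -- α t = ∫ k β on [0,T]
    have memInd : ∀ t : ℝ, MemLp ((Set.Ioc (0:ℝ) t).indicator (fun _ => (1:ℝ))) 2 μ := by
      intro t
      refine MemLp.of_bound ((measurable_const.indicator measurableSet_Ioc).aestronglyMeasurable) 1
        (Filter.Eventually.of_forall fun x => ?_)
      rw [Real.norm_eq_abs]
      by_cases hx : x ∈ Set.Ioc (0:ℝ) t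
      · rw [Set.indicator_of_mem hx]; norm_num
      · rw [Set.indicator_of_notMem hx]; norm_num
    have hΦχ : ∀ t, t ∈ Set.Icc 0 T →
        Φ ((memInd t).toLp _) = ∫ s in Set.Ioc 0 t, k s * β s := by
      intro t ht
      have hcomb : ∀ᵐ r ∂(volume.restrict (Set.Ioc 0 T)),
          d r • (y : ℝ → ℝ) r = k r * β r := by
        have hky' : ∀ᵐ r ∂((volume.restrict (Set.Ioc 0 T)).withDensity (fun r => (d r : ℝ≥0∞))),
            (y : ℝ → ℝ) r = k r := by rw [← hμdef]; exact hky
        have h2 := (ae_withDensity_iff hdmeas.coe_nnreal_ennreal).mp hky'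
        filter_upwards [hBae, h2] with r h1 h2
        by_cases hd : ((d r : ℝ≥0∞)) = 0
        · have hd0 : d r = 0 := by exact_mod_cast hd
          have hB0 : B r = 0 := by
            have h3 : (B r).toNNReal = 0 := hd0
            have h4 := Real.toNNReal_eq_zero.mp h3
            linarith [hBnonneg r]
          rw [hd0, zero_smul, ← h1, hB0, mul_zero]
        · rw [h2 hd]
          calc d r • k r = ((B r).toNNReal : ℝ) * k r := by
                rw [hddef]; simp [NNReal.smul_def]
            _ = B r * k r := by rw [Real.coe_toNNReal _ (hBnonneg r)]
            _ = k r * β r := by rw [h1]; ring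
      have step1 : Φ ((memInd t).toLp _)
          = ∫ a, (y : ℝ → ℝ) a * ((((memInd t).toLp _ : Lp ℝ 2 μ)) : ℝ → ℝ) a ∂μ := by
        rw [hyΦ, MeasureTheory.L2.inner_def]
        refine integral_congr_ae (Filter.Eventually.of_forall fun a => ?_)
        simp only [RCLike.inner_apply, conj_trivial, mul_comm]
      rw [step1]
      have step2 : (∫ a, (y : ℝ → ℝ) a * ((((memInd t).toLp _ : Lp ℝ 2 μ)) : ℝ → ℝ) a ∂μ)
          = ∫ a, (Set.Ioc 0 t).indicator (fun s => (y : ℝ → ℝ) s) a ∂μ := by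
        refine integral_congr_ae ?_
        filter_upwards [(memInd t).coeFn_toLp] with a ha
        rw [ha]
        by_cases hx : a ∈ Set.Ioc (0:ℝ) t
        · rw [Set.indicator_of_mem hx, Set.indicator_of_mem hx, mul_one]
        · rw [Set.indicator_of_notMem hx, Set.indicator_of_notMem hx, mul_zero]
      rw [step2, integral_indicator measurableSet_Ioc]
      have hr1 : μ.restrict (Set.Ioc 0 t)
          = ((volume.restrict (Set.Ioc 0 t)).withDensity (fun r => (d r : ℝ≥0∞))) := by
        rw [hμdef, restrict_withDensity measurableSet_Ioc,
          Measure.restrict_restrict measurableSet_Ioc,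
          Set.inter_eq_left.mpr (Set.Ioc_subset_Ioc_right ht.2)]
      rw [hr1, integral_withDensity_eq_integral_smul hdmeas]
      exact integral_congr_ae
        (ae_restrict_of_ae_restrict_of_subset (Set.Ioc_subset_Ioc_right ht.2) hcomb)
    intro t ht
    have hrep : α t = Φ ((memInd t).toLp _) := by
      rcases eq_or_lt_of_le ht.2 with htT | htT
      · -- t = T
        have honemem : (fun _ : ℝ => (1:ℝ)) ∈ Dsub := by
          show ContDiff ℝ 1 (fun _ : ℝ => (1:ℝ)); exact contDiff_const
        have hae : (fun _ : ℝ => (1:ℝ)) =ᵐ[μ] (Set.Ioc (0:ℝ) t).indicator (fun _ => (1:ℝ)) := by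
          filter_upwards [haeIoc] with x hx
          have hx' : x ∈ Set.Ioc 0 t := by rw [htT]; exact hx
          exact (Set.indicator_of_mem hx' (fun _ => (1:ℝ))).symm
        have h1 : Pl ⟨(fun _ => (1:ℝ)), honemem⟩ = (memInd t).toLp _ :=
          MemLp.toLp_congr
            (memC _ (hmemD ⟨(fun _ => (1:ℝ)), honemem⟩).continuous) (memInd t) hae
        rw [← h1, hΦP]
        show α t = A (fun _ => (1:ℝ))
        simp only [hAdef]
        rw [show (deriv (fun _ : ℝ => (1:ℝ))) = fun _ => 0 from funext fun x => deriv_const x 1]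
        rw [htT]
        simp
      · -- t < T : approximate the indicator of (0, t] by C¹ functions
        set ε : ℕ → ℝ := fun n => (T - t) / (n + 1) with hεdef
        have hεpos : ∀ n : ℕ, 0 < ε n := fun n => div_pos (by linarith) (by positivity)
        have hεle : ∀ n : ℕ, ε n ≤ T - t := by
          intro n
          rw [hεdef]
          apply div_le_self (by linarith)
          have h0 : (0:ℝ) ≤ n := Nat.cast_nonneg n
          linarith
        set F : ℕ → ℝ → ℝ := fun n r => Real.smoothTransition ((t + ε n - r) / ε n) with hFdef
        have hFC : ∀ n, ContDiff ℝ 1 (F n) := fun n =>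
          Real.smoothTransition.contDiff.comp ((contDiff_const.sub contDiff_id).div_const _)
        have hFmem : ∀ n : ℕ, F n ∈ Dsub := fun n =>
          show ContDiff ℝ 1 (F n) from hFC n
        have hF1 : ∀ n r, r ≤ t → F n r = 1 := fun n r hr =>
          Real.smoothTransition.one_of_one_le (by rw [le_div_iff₀ (hεpos n)]; linarith)
        have hF0 : ∀ n r, t + ε n ≤ r → F n r = 0 := by
          intro n r hr
          apply Real.smoothTransition.zero_of_nonpos
          apply div_nonpos_of_nonpos_of_nonneg (by linarith) (hεpos n).le
        have hFT : ∀ n, F n T = 0 := fun n => hF0 n T (by linarith [hεle n])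
        have hF00 : ∀ n, F n 0 = 1 := fun n => hF1 n 0 ht.1
        have hd0 : ∀ n r, r < t → deriv (F n) r = 0 := by
          intro n r hr
          have hev : F n =ᶠ[nhds r] fun _ => 1 :=
            Filter.eventually_of_mem (Iio_mem_nhds hr) fun x hx => hF1 n x (le_of_lt hx)
          rw [hev.deriv_eq]
          exact deriv_const _ _
        have hd0' : ∀ n r, t + ε n < r → deriv (F n) r = 0 := by
          intro n r hr
          have hev : F n =ᶠ[nhds r] fun _ => 0 :=
            Filter.eventually_of_mem (Ioi_mem_nhds hr) fun x hx => hF0 n x (le_of_lt hx)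
          rw [hev.deriv_eq]
          exact deriv_const _ _
        obtain ⟨C0, hC0⟩ := isCompact_Icc.exists_bound_of_continuousOn
          (((Real.smoothTransition.contDiff (n := 1)).continuous_deriv le_rfl).continuousOn :
            ContinuousOn (deriv Real.smoothTransition) (Set.Icc 0 1))
        have hC0nonneg : 0 ≤ C0 :=
          le_trans (norm_nonneg _) (hC0 0 ⟨le_refl _, zero_le_one⟩)
        have hdF : ∀ n r, deriv (F n) r
            = deriv Real.smoothTransition ((t + ε n - r) / ε n) * (-1 / ε n) := by
          intro n r
          have hinner : HasDerivAt (fun x : ℝ => (t + ε n - x) / ε n) (-1 / ε n) r := by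
            have h1 : HasDerivAt (fun x : ℝ => t + ε n - x) (-1) r :=
              (hasDerivAt_id r).const_sub (t + ε n)
            exact h1.div_const (ε n)
          have houter : HasDerivAt Real.smoothTransition
              (deriv Real.smoothTransition ((t + ε n - r) / ε n)) ((t + ε n - r) / ε n) :=
            (((Real.smoothTransition.contDiff (n := 1)).differentiable one_ne_zero) _).hasDerivAt
          exact (houter.comp r hinner).deriv
        have hdFbound : ∀ n r, r ∈ Set.Ioc t (t + ε n) → |deriv (F n) r| ≤ C0 / ε n := by
          intro n r hr
          rw [hdF, abs_mul]
          have harg : (t + ε n - r) / ε n ∈ Set.Icc (0:ℝ) 1 := by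
            constructor
            · exact div_nonneg (by linarith [hr.2]) (hεpos n).le
            · rw [div_le_one (hεpos n)]; linarith [hr.1]
          have h1 : |deriv Real.smoothTransition ((t + ε n - r) / ε n)| ≤ C0 := hC0 _ harg
          have h2 : |(-1 : ℝ) / ε n| = 1 / ε n := by
            rw [abs_div, abs_neg, abs_one, abs_of_pos (hεpos n)]
          rw [h2]
          calc |deriv Real.smoothTransition ((t + ε n - r) / ε n)| * (1 / ε n)
              ≤ C0 * (1 / ε n) := by
                exact mul_le_mul_of_nonneg_right h1 (le_of_lt (one_div_pos.mpr (hεpos n)))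
            _ = C0 / ε n := by ring
        -- FTC: total integral of the derivative
        have hder_cont : ∀ n : ℕ, Continuous (deriv (F n)) :=
          fun n => (hFC n).continuous_deriv le_rfl
        have hFTC : ∀ n : ℕ, (∫ r in Set.Ioc 0 T, deriv (F n) r) = -1 := by
          intro n
          have h1 : ∀ x ∈ Set.uIcc (0:ℝ) T, DifferentiableAt ℝ (F n) x :=
            fun x _ => ((hFC n).differentiable one_ne_zero).differentiableAt
          have h2 : IntervalIntegrable (deriv (F n)) volume 0 T :=
            (hder_cont n).intervalIntegrable 0 T
          have h3 := intervalIntegral.integral_deriv_eq_sub h1 h2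
          rw [intervalIntegral.integral_of_le hT.le] at h3
          rw [h3, hFT n, hF00 n]
          norm_num
        have hi1 : ∀ n, IntegrableOn (fun r => (α r - α t) * deriv (F n) r) (Set.Ioc 0 T) volume :=
          fun n => (((hαc.sub continuousOn_const).mul
            (hder_cont n).continuousOn).integrableOn_Icc).mono_set Set.Ioc_subset_Icc_self
        have hi2 : ∀ n, IntegrableOn (fun r => α t * deriv (F n) r) (Set.Ioc 0 T) volume :=
          fun n => ((continuousOn_const.mul
            (hder_cont n).continuousOn).integrableOn_Icc).mono_set Set.Ioc_subset_Icc_self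
        have hsplit : ∀ n, (∫ r in Set.Ioc 0 T, α r * deriv (F n) r)
            = (∫ r in Set.Ioc 0 T, (α r - α t) * deriv (F n) r) + α t * (-1) := by
          intro n
          rw [← hFTC n, ← integral_const_mul, ← integral_add (hi1 n) (hi2 n)]
          refine integral_congr_ae (Filter.Eventually.of_forall fun r => ?_)
          show α r * deriv (F n) r = (α r - α t) * deriv (F n) r + α t * deriv (F n) r
          ring
        have hsub : ∀ n, Set.Ioc t (t + ε n) ⊆ Set.Ioc 0 T :=
          fun n => Set.Ioc_subset_Ioc ht.1 (by linarith [hεle n])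
        have hreduce : ∀ n, (∫ r in Set.Ioc 0 T, (α r - α t) * deriv (F n) r)
            = ∫ r in Set.Ioc t (t + ε n), (α r - α t) * deriv (F n) r := by
          intro n
          refine setIntegral_eq_of_subset_of_forall_diff_eq_zero
            measurableSet_Ioc (hsub n) ?_
          intro x hx
          rcases lt_trichotomy x t with h | h | h
          · rw [hd0 n x h, mul_zero]
          · rw [h, sub_self, zero_mul]
          · have h2 : t + ε n < x := by
              rcases not_and_or.mp hx.2 with h2 | h2
              · exact absurd h h2
              · exact not_le.mp h2
            rw [hd0' n x h2, mul_zero]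
        have hArepr : ∀ n, A (F n) - α t
            = - ∫ r in Set.Ioc t (t + ε n), (α r - α t) * deriv (F n) r := by
          intro n
          simp only [hAdef]
          rw [hFT n, zero_mul, hsplit n, hreduce n]
          ring
        -- convergence of A (F n) to α t
        have hAtend : Tendsto (fun n => A (F n)) atTop (nhds (α t)) := by
          rw [Metric.tendsto_atTop]
          intro δ hδ
          have hcont : ContinuousWithinAt α (Set.Icc 0 T) t := hαc t ht
          rw [Metric.continuousWithinAt_iff] at hcont
          obtain ⟨δ₂, hδ₂pos, hδ₂⟩ := hcont (δ / (2 * (C0 + 1))) (div_pos hδ (by linarith))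
          obtain ⟨N, hN⟩ := exists_nat_gt ((T - t) / δ₂)
          refine ⟨N, fun n hn => ?_⟩
          have hεm : ε n ≤ ε N := by
            rw [hεdef]
            apply div_le_div_of_nonneg_left (by linarith) (by positivity)
            have : (N : ℝ) ≤ n := Nat.cast_le.mpr hn
            linarith
          have hεN : ε N < δ₂ := by
            rw [hεdef, div_lt_iff₀ (by positivity)]
            have h4 : T - t < N * δ₂ := by
              have := (div_lt_iff₀ hδ₂pos).mp hN
              linarith
            nlinarith [hδ₂pos]
          have hεn : ε n < δ₂ := lt_of_le_of_lt hεm hεN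
          rw [Real.dist_eq, hArepr n, abs_neg]
          have hbound := norm_setIntegral_le_of_norm_le_const
            (μ := volume) (s := Set.Ioc t (t + ε n))
            (C := δ / (2 * (C0 + 1)) * (C0 / ε n))
            (f := fun r => (α r - α t) * deriv (F n) r)
            (by exact measure_Ioc_lt_top) ?_
          · have hvol : (volume (Set.Ioc t (t + ε n))).toReal = ε n := by
              rw [Real.volume_Ioc, ENNReal.toReal_ofReal (by linarith [hεpos n])]
              ring
            rw [Real.norm_eq_abs, Measure.real] at hbound
            rw [hvol] at hbound
            have heq : δ / (2 * (C0 + 1)) * (C0 / ε n) * ε n = δ * C0 / (2 * (C0 + 1)) := by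
              have hεne : ε n ≠ 0 := (hεpos n).ne'
              field_simp
            rw [heq] at hbound
            have hlt : δ * C0 / (2 * (C0 + 1)) < δ := by
              rw [div_lt_iff₀ (by linarith : (0:ℝ) < 2 * (C0 + 1))]
              nlinarith
            exact lt_of_le_of_lt hbound hlt
          · intro x hx
            rw [Real.norm_eq_abs, abs_mul]
            have hxI : x ∈ Set.Icc 0 T :=
              ⟨by linarith [hx.1, ht.1], by linarith [hx.2, hεle n]⟩
            have hdist : dist x t < δ₂ := by
              rw [Real.dist_eq, abs_of_pos (by linarith [hx.1] : 0 < x - t)]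
              linarith [hx.2]
            have h5 : |α x - α t| ≤ δ / (2 * (C0 + 1)) := by
              have := hδ₂ hxI hdist
              rw [Real.dist_eq] at this
              exact this.le
            exact mul_le_mul h5 (hdFbound n x hx) (abs_nonneg _) (div_nonneg hδ.le (by linarith))
        -- convergence of Pl (F n) to the indicator in L²
        have hint2' : ∀ n, Integrable ((Set.Ioc t (t + ε n)).indicator (fun _ => (1:ℝ))) μ :=
          fun n => (integrable_const (1:ℝ)).indicator measurableSet_Ioc
        have hbound2 : ∀ n, ‖Pl ⟨F n, hFmem n⟩ - (memInd t).toLp _‖ ^ 2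
            ≤ (μ (Set.Ioc t (t + ε n))).toReal := by
          intro n
          have hdiff_eq : Pl ⟨F n, hFmem n⟩ - (memInd t).toLp _
              = ((memC (F n) (hFC n).continuous).sub (memInd t)).toLp
                  (F n - (Set.Ioc 0 t).indicator (fun _ => (1:ℝ))) := by
            exact (MemLp.toLp_sub (memC (F n) (hFC n).continuous) (memInd t)).symm
          rw [hdiff_eq, normsq]
          have hint1 : Integrable
              (fun r => (F n - (Set.Ioc 0 t).indicator (fun _ => (1:ℝ))) r ^ 2) μ :=
            ((memC (F n) (hFC n).continuous).sub (memInd t)).integrable_sq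
          have hmono : (fun r => (F n - (Set.Ioc 0 t).indicator (fun _ => (1:ℝ))) r ^ 2)
              ≤ᵐ[μ] (Set.Ioc t (t + ε n)).indicator (fun _ => (1:ℝ)) := by
            filter_upwards [haeIoc] with x hx
            rcases le_or_gt x t with h1 | h1
            · have hmem : x ∈ Set.Ioc 0 t := ⟨hx.1, h1⟩
              have hnot : x ∉ Set.Ioc t (t + ε n) := fun h => absurd h.1 (not_lt.mpr h1)
              rw [Pi.sub_apply, hF1 n x h1, Set.indicator_of_mem hmem,
                Set.indicator_of_notMem hnot]
              norm_num
            · have hnot1 : x ∉ Set.Ioc 0 t := fun h => absurd h.2 (not_le.mpr h1)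
              rcases le_or_gt x (t + ε n) with h2 | h2
              · have hmem : x ∈ Set.Ioc t (t + ε n) := ⟨h1, h2⟩
                rw [Pi.sub_apply, Set.indicator_of_notMem hnot1,
                  Set.indicator_of_mem hmem, sub_zero]
                have hle := Real.smoothTransition.le_one ((t + ε n - x) / ε n)
                have hge := Real.smoothTransition.nonneg ((t + ε n - x) / ε n)
                have : F n x = Real.smoothTransition ((t + ε n - x) / ε n) := rfl
                rw [this]
                nlinarith
              · have hnot2 : x ∉ Set.Ioc t (t + ε n) := fun h => absurd h.2 (not_le.mpr h2)
                rw [Pi.sub_apply, hF0 n x h2.le, Set.indicator_of_notMem hnot1,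
                  Set.indicator_of_notMem hnot2]
                norm_num
          calc (∫ r, (F n - (Set.Ioc 0 t).indicator (fun _ => (1:ℝ))) r ^ 2 ∂μ)
              ≤ ∫ r, (Set.Ioc t (t + ε n)).indicator (fun _ => (1:ℝ)) r ∂μ :=
                integral_mono_ae hint1 (hint2' n) hmono
            _ = (μ (Set.Ioc t (t + ε n))).toReal := by
                rw [integral_indicator_const (1:ℝ) measurableSet_Ioc, smul_eq_mul, mul_one, Measure.real]
        have hiInter : (⋂ n : ℕ, Set.Ioc t (t + ε n)) = ∅ := by
          ext x
          simp only [Set.mem_iInter, Set.mem_Ioc, Set.mem_empty_iff_false, iff_false, not_forall]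
          by_contra hcon
          push_neg at hcon
          have hxt : t < x := (hcon 0).1
          obtain ⟨n, hn⟩ := exists_nat_gt ((T - t) / (x - t))
          have h1 : (T - t) / (x - t) < (n : ℝ) + 1 := by linarith
          have h2 : T - t < (x - t) * ((n : ℝ) + 1) := by
            rw [div_lt_iff₀ (by linarith)] at h1
            linarith
          have h3 : ε n < x - t := by
            rw [hεdef, div_lt_iff₀ (by positivity)]
            linarith
          linarith [(hcon n).2]
        have hεanti : Antitone fun n : ℕ => Set.Ioc t (t + ε n) := by
          intro m n hmn
          apply Set.Ioc_subset_Ioc_right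
          have h1 : ε n ≤ ε m := by
            rw [hεdef]
            apply div_le_div_of_nonneg_left (by linarith) (by positivity)
            have : (m : ℝ) ≤ n := Nat.cast_le.mpr hmn
            linarith
          linarith
        have hμt : Tendsto (fun n => μ (Set.Ioc t (t + ε n))) atTop (nhds 0) := by
          have := tendsto_measure_iInter_atTop (μ := μ)
            (fun n => measurableSet_Ioc.nullMeasurableSet) hεanti
            ⟨0, measure_ne_top μ _⟩
          rw [hiInter] at this
          simpa [Function.comp_def] using this
        have hμtr : Tendsto (fun n => (μ (Set.Ioc t (t + ε n))).toReal) atTop (nhds 0) := by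
          have h0 := (ENNReal.tendsto_toReal (by simp : (0:ℝ≥0∞) ≠ ⊤)).comp hμt
          simpa [Function.comp_def] using h0
        have hnsq : Tendsto (fun n => ‖Pl ⟨F n, hFmem n⟩ - (memInd t).toLp _‖ ^ 2)
            atTop (nhds 0) :=
          squeeze_zero (fun n => sq_nonneg _) hbound2 hμtr
        have hn1 : Tendsto (fun n => ‖Pl ⟨F n, hFmem n⟩ - (memInd t).toLp _‖)
            atTop (nhds 0) := by
          have heq : (fun n => ‖Pl ⟨F n, hFmem n⟩ - (memInd t).toLp _‖)
              = fun n => Real.sqrt (‖Pl ⟨F n, hFmem n⟩ - (memInd t).toLp _‖ ^ 2) :=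
            funext fun n => (Real.sqrt_sq (norm_nonneg _)).symm
          rw [heq]
          simpa using hnsq.sqrt
        have hPltend : Tendsto (fun n => Pl ⟨F n, hFmem n⟩) atTop
            (nhds ((memInd t).toLp _)) := by
          rw [tendsto_iff_norm_sub_tendsto_zero]
          exact hn1
        have h2 : Tendsto (fun n => A (F n)) atTop (nhds (Φ ((memInd t).toLp _))) := by
          have h3 := (Φ.continuous.tendsto _).comp hPltend
          have heq : (fun n => Φ (Pl ⟨F n, hFmem n⟩)) = fun n => A (F n) :=
            funext fun n => hΦP ⟨F n, hFmem n⟩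
          rw [show (⇑Φ ∘ fun n => Pl ⟨F n, hFmem n⟩) = fun n => Φ (Pl ⟨F n, hFmem n⟩) from rfl,
            heq] at h3
          exact h3
        exact tendsto_nhds_unique hAtend h2
    rw [hrep, hΦχ t ht]
end
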